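/- arXiv:2103.11858 — 4 statements merged into one kernel-verified Lean document; each statement's English description precedes it below -/
import Mathlib

section
/- Fix ε > 0 and define V_ε(ξ) = (1/2)·log(√((1 − ξ²)² + ε²)/√(1 + ε²)). Then there exists an even, twice continuously differentiable function u : ℝ → ℝ with u(0) = √2, 0 < u(x) ≤ √2 for all x, and u(x) → 0 as |x| → ∞, satisfying for all x ∈ ℝ both the regularized equation u''(x) = u(x)·(1 − u(x)²)/((1 − u(x)²)² + ε²) and the first-order invariant (1/2)·u'(x)² + V_ε(u(x)) = 0. -/
open Filter Set MeasureTheory intervalIntegral Asymptotics Topology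


noncomputable def phiP (r : ℝ) : ℝ := ∫ t in (0:ℝ)..1, (1 - t * r)⁻¹

lemma one_sub_mul_pos {r t : ℝ} (hr : r < 1) (ht : t ∈ Icc (0:ℝ) 1) : 0 < 1 - t * r := by
  obtain ⟨h0, h1⟩ := ht
  nlinarith [mul_nonneg h0 (sub_pos.2 hr).le]

lemma contOn_phi_integrand {r : ℝ} (hr : r < 1) :
    ContinuousOn (fun t : ℝ => (1 - t * r)⁻¹) (Icc 0 1) := by
  apply ContinuousOn.inv₀
  · fun_prop
  · intro t ht; exact (one_sub_mul_pos hr ht).ne'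

lemma intervalIntegrable_phi {r : ℝ} (hr : r < 1) :
    IntervalIntegrable (fun t : ℝ => (1 - t * r)⁻¹) volume 0 1 := by
  apply ContinuousOn.intervalIntegrable
  rw [uIcc_of_le (by norm_num : (0:ℝ) ≤ 1)]
  exact contOn_phi_integrand hr

lemma mul_phiP {r : ℝ} (hr : r < 1) : r * phiP r = -Real.log (1 - r) := by
  have hderiv : ∀ t ∈ uIcc (0:ℝ) 1,
      HasDerivAt (fun t => -Real.log (1 - t * r)) (r * (1 - t * r)⁻¹) t := by
    intro t ht
    rw [uIcc_of_le (by norm_num)] at ht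
    have h1 : HasDerivAt (fun t : ℝ => 1 - t * r) (-r) t := by
      simpa using ((hasDerivAt_id t).mul_const r).const_sub 1
    have h2 := (h1.log (one_sub_mul_pos hr ht).ne').neg
    refine h2.congr_deriv ?_
    rw [neg_div, neg_neg, div_eq_mul_inv]
  have hint : IntervalIntegrable (fun t : ℝ => r * (1 - t * r)⁻¹) volume 0 1 :=
    (intervalIntegrable_phi hr).const_mul r
  have := integral_eq_sub_of_hasDerivAt hderiv hint
  rw [intervalIntegral.integral_const_mul] at this
  simp only [phiP]
  rw [this]
  simp

lemma phiP_zero : phiP 0 = 1 := by simp [phiP]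

lemma one_le_phiP {r : ℝ} (h0 : 0 ≤ r) (h1 : r < 1) : 1 ≤ phiP r := by
  have : (1:ℝ) = ∫ t in (0:ℝ)..1, (1:ℝ) := by simp
  rw [this]
  apply intervalIntegral.integral_mono_on (by norm_num)
    (intervalIntegrable_const) (intervalIntegrable_phi h1)
  intro t ht
  rw [le_inv_comm₀]
  · nlinarith [ht.1, ht.2, mul_nonneg ht.1 h0]
  · norm_num
  · exact one_sub_mul_pos h1 ht

lemma phiP_le {r : ℝ} (h0 : 0 ≤ r) (h1 : r < 1) : phiP r ≤ (1 - r)⁻¹ := by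
  have : ((1:ℝ) - r)⁻¹ = ∫ t in (0:ℝ)..1, (1 - r)⁻¹ := by simp
  rw [this]
  apply intervalIntegral.integral_mono_on (by norm_num)
    (intervalIntegrable_phi h1) (intervalIntegrable_const)
  intro t ht
  apply inv_anti₀ (by linarith)
  nlinarith [ht.1, ht.2]

-- assume phiP block (use axioms here for speed of iteration)

noncomputable def rr (ε σ : ℝ) : ℝ :=
  (Real.sqrt 2 - σ^2)^2 * (2 - (Real.sqrt 2 - σ^2)^2) / (1 + ε^2)
noncomputable def base (ε σ : ℝ) : ℝ :=
  (Real.sqrt 2 - σ^2)^2 * (Real.sqrt 2 + (Real.sqrt 2 - σ^2)) / (2 * (1 + ε^2))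
noncomputable def mfun (ε σ : ℝ) : ℝ := base ε σ * phiP (rr ε σ)
noncomputable def Wfun (ε ξ : ℝ) : ℝ := -(1/2) * Real.log (((1 - ξ^2)^2 + ε^2) / (1 + ε^2))
noncomputable def ffun (ε ξ : ℝ) : ℝ := ξ * (1 - ξ^2) / ((1 - ξ^2)^2 + ε^2)

lemma hs2 : Real.sqrt 2 ^ 2 = 2 := Real.sq_sqrt (by norm_num)
lemma hs2a : Real.sqrt 2 ≤ 3/2 := by nlinarith [hs2, Real.sqrt_nonneg 2]
lemma hs2b : 1 ≤ Real.sqrt 2 := by nlinarith [hs2, Real.sqrt_nonneg 2]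

lemma rr_lt_one (ε : ℝ) (hε : 0 < ε) (σ : ℝ) : rr ε σ < 1 := by
  rw [rr, div_lt_one (by positivity)]
  nlinarith [sq_nonneg (1 - (Real.sqrt 2 - σ^2)^2), sq_nonneg ε]

lemma rr_nonneg (ε : ℝ) {σ : ℝ} (h : σ^2 ≤ Real.sqrt 2) : 0 ≤ rr ε σ := by
  have h1 : 0 ≤ Real.sqrt 2 - σ^2 := by linarith
  have h2 : (Real.sqrt 2 - σ^2)^2 ≤ 2 := by nlinarith [hs2, Real.sqrt_nonneg 2, sq_nonneg σ]
  rw [rr]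
  exact div_nonneg (mul_nonneg (sq_nonneg _) (by linarith)) (by positivity)

lemma rr_pos (ε : ℝ) (hε : 0 < ε) {σ : ℝ} (h : σ^2 < Real.sqrt 2) (hσ : σ ≠ 0) :
    0 < rr ε σ := by
  have h0 : 0 < σ^2 := by positivity
  have h1 : 0 < Real.sqrt 2 - σ^2 := by linarith
  have h2 : (Real.sqrt 2 - σ^2)^2 < 2 := by nlinarith [hs2, Real.sqrt_nonneg 2]
  rw [rr]
  exact div_pos (mul_pos (pow_pos h1 2) (by linarith)) (by positivity)

lemma mfun_pos (ε : ℝ) (hε : 0 < ε) {σ : ℝ} (h : σ^2 < Real.sqrt 2) : 0 < mfun ε σ := by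
  have h1 : 0 < Real.sqrt 2 - σ^2 := by linarith [sq_nonneg σ]
  have hb : 0 < base ε σ := by
    rw [base]; have := Real.sqrt_nonneg 2; positivity
  have hp : 0 < phiP (rr ε σ) :=
    lt_of_lt_of_le one_pos (one_le_phiP (rr_nonneg ε (le_of_lt h)) (rr_lt_one ε hε σ))
  exact mul_pos hb hp

lemma key_id (ε : ℝ) (hε : 0 < ε) {σ : ℝ} (h : σ^2 ≤ Real.sqrt 2) :
    σ^2 * mfun ε σ = Wfun ε (Real.sqrt 2 - σ^2) := by
  have hc : (0:ℝ) < 1 + ε^2 := by positivity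
  set ξ := Real.sqrt 2 - σ^2 with hξ
  have hσ : σ^2 = Real.sqrt 2 - ξ := by rw [hξ]; ring
  have hr1 : rr ε σ < 1 := rr_lt_one ε hε σ
  have hmain := mul_phiP hr1
  have hrr : rr ε σ = ξ^2 * (2 - ξ^2) / (1+ε^2) := rfl
  have hAc : ((1-ξ^2)^2+ε^2)/(1+ε^2) = 1 - rr ε σ := by
    rw [hrr]; field_simp; ring
  have hscal : σ^2 * (ξ^2 * (Real.sqrt 2 + ξ)) = rr ε σ * (1+ε^2) := by
    rw [hrr]; field_simp
    linear_combination (ξ^2 * (Real.sqrt 2 + ξ)) * hσ + ξ^2 * hs2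
  have hlhs : σ^2 * mfun ε σ = rr ε σ * phiP (rr ε σ) / 2 := by
    rw [mfun, base, ← hξ]
    field_simp
    linear_combination phiP (rr ε σ) * hscal
  rw [hlhs, hmain, Wfun, hAc]
  ring

lemma hasDerivAt_nn (ε : ℝ) (hε : 0 < ε) (σ : ℝ) :
    HasDerivAt (fun σ : ℝ => Wfun ε (Real.sqrt 2 - σ^2))
      (-4*σ*ffun ε (Real.sqrt 2 - σ^2)) σ := by
  set ξ := Real.sqrt 2 - σ^2 with hξ
  have hA : (0:ℝ) < (1-ξ^2)^2+ε^2 := by positivity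
  have hc : (0:ℝ) < 1+ε^2 := by positivity
  have hp : ∀ y : ℝ, HasDerivAt (fun ξ:ℝ => 1-ξ^2) (-(2*y)) y := by
    intro y; simpa using ((hasDerivAt_pow 2 y).const_sub 1)
  have h1 : HasDerivAt (fun ξ : ℝ => ((1-ξ^2)^2+ε^2)/(1+ε^2)) ((-4*ξ*(1-ξ^2))/(1+ε^2)) ξ := by
    have h0 : HasDerivAt (fun ξ:ℝ => (1-ξ^2)^2+ε^2) (-4*ξ*(1-ξ^2)) ξ := by
      have := ((hp ξ).pow 2).add_const (ε^2)
      refine this.congr_deriv ?_; ring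
    exact h0.div_const _
  have h2 : HasDerivAt (Wfun ε) (2*ffun ε ξ) ξ := by
    have hlog := (h1.log (by positivity)).const_mul (-(1/2):ℝ)
    have heq : Wfun ε = fun ξ => -(1/2) * Real.log (((1-ξ^2)^2+ε^2)/(1+ε^2)) := rfl
    rw [heq]
    refine hlog.congr_deriv ?_
    rw [ffun]; field_simp; ring
  have hin : HasDerivAt (fun σ:ℝ => Real.sqrt 2 - σ^2) (-(2*σ)) σ := by
    simpa using ((hasDerivAt_pow 2 σ).const_sub (Real.sqrt 2))
  have := h2.comp σ hin
  refine this.congr_deriv ?_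
  ring


lemma diff_rr (ε : ℝ) : Differentiable ℝ (rr ε) := by
  unfold rr; fun_prop

lemma diff_base (ε : ℝ) : Differentiable ℝ (base ε) := by
  unfold base; fun_prop

lemma rr_quad (ε : ℝ) {σ : ℝ} (h : |σ| ≤ 1/4) : rr ε σ ≤ 7 * σ^2 := by
  have h2 : σ^2 ≤ 1/16 := by nlinarith [abs_nonneg σ, sq_abs σ]
  have hξ1 : Real.sqrt 2 - σ^2 ≤ 3/2 := by nlinarith [hs2a, sq_nonneg σ]
  have hξ0 : 0 ≤ Real.sqrt 2 - σ^2 := by nlinarith [hs2b]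
  have hfact : 2 - (Real.sqrt 2 - σ^2)^2 = σ^2 * (2*Real.sqrt 2 - σ^2) := by
    linear_combination -hs2
  have hc : (1:ℝ) ≤ 1 + ε^2 := by nlinarith [sq_nonneg ε]
  rw [rr, hfact]
  rw [div_le_iff₀ (by linarith)]
  have h3 : (Real.sqrt 2 - σ^2)^2 ≤ 9/4 := by nlinarith
  have h4 : 2*Real.sqrt 2 - σ^2 ≤ 3 := by nlinarith [hs2a]
  have h5 : 0 ≤ 2*Real.sqrt 2 - σ^2 := by nlinarith [hs2b]
  have e1 : σ^2*(2*Real.sqrt 2-σ^2) ≤ 3*σ^2 := by nlinarith [sq_nonneg σ]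
  have e0 : 0 ≤ σ^2*(2*Real.sqrt 2-σ^2) := mul_nonneg (sq_nonneg σ) h5
  have e2 : (Real.sqrt 2-σ^2)^2*(σ^2*(2*Real.sqrt 2-σ^2)) ≤ (9/4)*(3*σ^2) :=
    mul_le_mul h3 e1 e0 (by norm_num)
  nlinarith [sq_nonneg σ, mul_nonneg (sq_nonneg σ) (sq_nonneg ε)]

lemma phiP_near_one {r : ℝ} (h0 : 0 ≤ r) (h1 : r ≤ 1/2) : |phiP r - 1| ≤ 2 * r := by
  have hr1 : r < 1 := by linarith
  have hlow : 0 ≤ phiP r - 1 := by linarith [one_le_phiP h0 hr1]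
  have hup : phiP r ≤ (1-r)⁻¹ := phiP_le h0 hr1
  have hinv : (1-r)⁻¹ ≤ 1 + 2*r := by
    rw [inv_eq_one_div, div_le_iff₀ (by linarith)]
    nlinarith
  rw [abs_of_nonneg hlow]; linarith

lemma hasDerivAt_phiP_rr_zero (ε : ℝ) (hε : 0 < ε) :
    HasDerivAt (fun σ => phiP (rr ε σ)) 0 0 := by
  rw [hasDerivAt_iff_isLittleO]
  have hrr0 : rr ε 0 = 0 := by
    rw [rr]; simp [hs2]
  have hbig : (fun σ:ℝ => phiP (rr ε σ) - phiP (rr ε 0)) =O[𝓝 0] (fun σ => σ^2) := by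
    rw [hrr0, phiP_zero]
    apply IsBigO.of_bound 14
    have hball : ∀ᶠ σ:ℝ in 𝓝 0, |σ| ≤ 1/4 := by
      filter_upwards [Metric.ball_mem_nhds (0:ℝ) (by norm_num : (0:ℝ) < 1/4)] with σ hσ
      rw [Metric.mem_ball, Real.dist_eq, sub_zero] at hσ; linarith
    filter_upwards [hball] with σ hσ
    have hs : σ^2 ≤ 1/16 := by nlinarith [abs_nonneg σ, sq_abs σ]
    have hss : σ^2 ≤ Real.sqrt 2 := by nlinarith [hs2b]
    have h6 : rr ε σ ≤ 7*σ^2 := rr_quad ε hσ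
    have h0 : 0 ≤ rr ε σ := rr_nonneg ε hss
    have := phiP_near_one h0 (by linarith)
    rw [Real.norm_eq_abs, Real.norm_eq_abs, abs_of_nonneg (sq_nonneg σ)]
    calc |phiP (rr ε σ) - 1| ≤ 2 * rr ε σ := this
    _ ≤ 14 * σ^2 := by linarith
  have hlit : (fun σ:ℝ => σ^2) =o[𝓝 0] (fun σ:ℝ => σ) := by
    simpa using isLittleO_pow_id (𝕜 := ℝ) (n := 2) (by norm_num)
  have := hbig.trans_isLittleO hlit
  simpa using this

lemma hasDerivAt_mfun (ε : ℝ) (hε : 0 < ε) {σ₀ : ℝ} (h : σ₀^2 < Real.sqrt 2) :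
    ∃ dm, HasDerivAt (mfun ε) dm σ₀ := by
  rcases eq_or_ne σ₀ 0 with h0 | h0
  · subst h0
    have hb := ((diff_base ε) 0).hasDerivAt
    exact ⟨_, hb.mul (hasDerivAt_phiP_rr_zero ε hε)⟩
  · -- away from 0: rr positive, use explicit formula
    have hrpos := rr_pos ε hε h h0
    have hrcont : ContinuousAt (rr ε) σ₀ := ((diff_rr ε) σ₀).continuousAt
    have hev : ∀ᶠ σ in 𝓝 σ₀, 0 < rr ε σ :=
      hrcont.eventually (eventually_gt_nhds hrpos)
    have heq : (fun σ => base ε σ * (-Real.log (1 - rr ε σ) / rr ε σ)) =ᶠ[𝓝 σ₀] mfun ε := by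
      filter_upwards [hev] with σ hσ
      have h1 : rr ε σ < 1 := rr_lt_one ε hε σ
      have := mul_phiP h1
      rw [mfun]
      congr 1
      field_simp
      linarith [mul_phiP h1]
    have hrd : HasDerivAt (rr ε) (deriv (rr ε) σ₀) σ₀ := ((diff_rr ε) σ₀).hasDerivAt
    have hlog : HasDerivAt (fun σ => -Real.log (1 - rr ε σ))
        (-((-(deriv (rr ε) σ₀)) / (1 - rr ε σ₀))) σ₀ := by
      have hne : 1 - rr ε σ₀ ≠ 0 := ne_of_gt (by linarith [rr_lt_one ε hε σ₀])
      exact ((hrd.const_sub 1).log hne).neg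
    have hdiv := hlog.div hrd hrpos.ne'
    have hb := ((diff_base ε) σ₀).hasDerivAt
    exact ⟨_, (hb.mul hdiv).congr_of_eventuallyEq heq.symm⟩


noncomputable def gg (ε σ : ℝ) : ℝ := 2 / Real.sqrt (mfun ε σ)
noncomputable def HH (ε s : ℝ) : ℝ := ∫ σ in (0:ℝ)..s, gg ε σ
noncomputable def bb : ℝ := Real.sqrt (Real.sqrt 2)

lemma bb_pos : 0 < bb := Real.sqrt_pos.2 (lt_of_lt_of_le one_pos hs2b)
lemma bb_sq : bb^2 = Real.sqrt 2 := Real.sq_sqrt (Real.sqrt_nonneg 2)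
lemma bb_le : bb ≤ 3/2 := by nlinarith [bb_sq, hs2a, bb_pos]

lemma mem_Ioo_iff {σ : ℝ} : σ ∈ Ioo (-bb) bb ↔ σ^2 < Real.sqrt 2 := by
  rw [← bb_sq]
  constructor
  · intro h; exact sq_lt_sq' h.1 h.2
  · intro h
    exact abs_lt_of_sq_lt_sq' h bb_pos.le

lemma gg_pos (ε : ℝ) (hε : 0 < ε) {σ : ℝ} (h : σ^2 < Real.sqrt 2) : 0 < gg ε σ :=
  div_pos two_pos (Real.sqrt_pos.2 (mfun_pos ε hε h))

lemma gg_contOn (ε : ℝ) (hε : 0 < ε) : ContinuousOn (gg ε) (Ioo (-bb) bb) := by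
  intro σ hσ
  have h := mem_Ioo_iff.mp hσ
  obtain ⟨dm, hdm⟩ := hasDerivAt_mfun ε hε h
  have hm : ContinuousAt (mfun ε) σ := hdm.continuousAt
  have hs : ContinuousAt (fun σ => Real.sqrt (mfun ε σ)) σ :=
    Real.continuous_sqrt.continuousAt.comp hm
  exact (continuousAt_const.div hs (Real.sqrt_pos.2 (mfun_pos ε hε h)).ne').continuousWithinAt

lemma gg_int (ε : ℝ) (hε : 0 < ε) {s t : ℝ} (hs : s ∈ Ioo (-bb) bb) (ht : t ∈ Ioo (-bb) bb) :
    IntervalIntegrable (gg ε) volume s t :=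
  ((gg_contOn ε hε).mono (Set.OrdConnected.uIcc_subset Set.ordConnected_Ioo hs ht)).intervalIntegrable

lemma zero_mem : (0:ℝ) ∈ Ioo (-bb) bb := ⟨by linarith [bb_pos], bb_pos⟩

lemma hasDerivAt_HH (ε : ℝ) (hε : 0 < ε) {σ : ℝ} (hσ : σ ∈ Ioo (-bb) bb) :
    HasDerivAt (HH ε) (gg ε σ) σ := by
  apply intervalIntegral.integral_hasDerivAt_right (gg_int ε hε zero_mem hσ)
    ((gg_contOn ε hε).stronglyMeasurableAtFilter isOpen_Ioo σ hσ)
  exact ((gg_contOn ε hε) σ hσ).continuousAt (isOpen_Ioo.mem_nhds hσ)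

lemma HH_strictMonoOn (ε : ℝ) (hε : 0 < ε) : StrictMonoOn (HH ε) (Ioo (-bb) bb) := by
  intro s hs t ht hst
  have hsplit := intervalIntegral.integral_add_adjacent_intervals
    (gg_int ε hε zero_mem hs) (gg_int ε hε hs ht)
  have hpos : 0 < ∫ σ in s..t, gg ε σ := by
    apply intervalIntegral.intervalIntegral_pos_of_pos_on (gg_int ε hε hs ht) _ hst
    intro x hx
    exact gg_pos ε hε (mem_Ioo_iff.mp ⟨lt_trans hs.1 hx.1, lt_trans hx.2 ht.2⟩)
  show HH ε s < HH ε t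
  unfold HH
  rw [← hsplit]
  linarith

lemma HH_odd (ε : ℝ) (s : ℝ) : HH ε (-s) = -HH ε s := by
  have hgeven : ∀ σ, gg ε (-σ) = gg ε σ := by
    intro σ; simp [gg, mfun, base, rr, neg_sq]
  have h1 : HH ε s = ∫ x in (0:ℝ)..s, gg ε (-x) := by
    unfold HH; apply intervalIntegral.integral_congr; intro x _; exact (hgeven x).symm
  rw [intervalIntegral.integral_comp_neg] at h1
  rw [neg_zero] at h1
  unfold HH
  rw [intervalIntegral.integral_symm, ← h1]
  rfl

lemma gg_lower (ε : ℝ) (hε : 0 < ε) {s σ : ℝ} (hs : s < bb) (h1 : bb/2 ≤ σ) (h2 : σ ≤ s) :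
    2*ε/(3*bb) * (bb - σ)⁻¹ ≤ gg ε σ := by
  have hσb : σ < bb := lt_of_le_of_lt h2 hs
  have hσ0 : 0 < σ := lt_of_lt_of_le (by linarith [bb_pos]) h1
  have hmem : σ^2 < Real.sqrt 2 := mem_Ioo_iff.mp ⟨by linarith [bb_pos], hσb⟩
  have hξ0 : 0 < Real.sqrt 2 - σ^2 := by linarith
  have hξb : Real.sqrt 2 - σ^2 ≤ 2*bb*(bb - σ) := by
    nlinarith [bb_sq, bb_pos]
  have hrle : rr ε σ ≤ 1/(1+ε^2) := by
    rw [rr, div_le_div_iff₀ (by positivity) (by positivity)]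
    nlinarith [sq_nonneg (1 - (Real.sqrt 2 - σ^2)^2), sq_nonneg ε]
  have hr0 : 0 ≤ rr ε σ := rr_nonneg ε hmem.le
  have hr1 : rr ε σ < 1 := rr_lt_one ε hε σ
  have hphi : phiP (rr ε σ) ≤ (1+ε^2)/ε^2 := by
    calc phiP (rr ε σ) ≤ (1 - rr ε σ)⁻¹ := phiP_le hr0 hr1
    _ ≤ (1 - 1/(1+ε^2))⁻¹ := by
        apply inv_anti₀
        · have : 1/(1+ε^2) < 1 := by rw [div_lt_one (by positivity)]; nlinarith
          linarith
        · linarith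
    _ = (1+ε^2)/ε^2 := by field_simp; ring
  have hphi0 : 0 ≤ phiP (rr ε σ) := le_trans (by norm_num) (one_le_phiP hr0 hr1)
  have hbase : base ε σ ≤ (3/2) * (Real.sqrt 2 - σ^2)^2 / (1+ε^2) := by
    rw [base, div_le_div_iff₀ (by positivity) (by positivity)]
    have hup : Real.sqrt 2 + (Real.sqrt 2 - σ^2) ≤ 3 := by nlinarith [hs2a, sq_nonneg σ]
    nlinarith [hup, mul_nonneg (sq_nonneg (Real.sqrt 2 - σ^2)) (by positivity : (0:ℝ) ≤ 1+ε^2)]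
  have hmle : mfun ε σ ≤ (3*bb*(bb-σ)/ε)^2 := by
    have h1' : mfun ε σ ≤ ((3/2) * (Real.sqrt 2 - σ^2)^2 / (1+ε^2)) * ((1+ε^2)/ε^2) := by
      rw [mfun]
      apply mul_le_mul hbase hphi hphi0 (by positivity)
    have h2' : ((3/2) * (Real.sqrt 2 - σ^2)^2 / (1+ε^2)) * ((1+ε^2)/ε^2)
        = (3/2) * (Real.sqrt 2 - σ^2)^2 / ε^2 := by field_simp
    have h3' : (3/2) * (Real.sqrt 2 - σ^2)^2 / ε^2 ≤ (3/2) * (2*bb*(bb-σ))^2 / ε^2 := by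
      rw [div_le_div_iff₀ (by positivity) (by positivity)]
      have hY : (0:ℝ) ≤ 2*bb*(bb-σ) := mul_nonneg (by linarith [bb_pos]) (sub_pos.2 hσb).le
      nlinarith [mul_le_mul hξb hξb hξ0.le hY, sq_nonneg ε, sq_nonneg σ]
    have h4' : (3/2) * (2*bb*(bb-σ))^2 / ε^2 ≤ (3*bb*(bb-σ)/ε)^2 := by
      rw [div_pow, div_le_div_iff₀ (by positivity) (by positivity)]
      nlinarith [bb_pos, sub_pos.2 hσb, sq_nonneg (bb*(bb-σ)), sq_nonneg ε]
    linarith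
  have hsqle : Real.sqrt (mfun ε σ) ≤ 3*bb*(bb-σ)/ε := by
    have := Real.sqrt_le_sqrt hmle
    rwa [Real.sqrt_sq (div_nonneg (mul_nonneg (by linarith [bb_pos]) (sub_pos.2 hσb).le) hε.le)] at this
  have hm0 : 0 < Real.sqrt (mfun ε σ) := Real.sqrt_pos.2 (mfun_pos ε hε hmem)
  calc 2*ε/(3*bb) * (bb - σ)⁻¹ = 2 / (3*bb*(bb-σ)/ε) := by
        rw [← div_eq_mul_inv, div_div, div_div_eq_mul_div]
  _ ≤ 2 / Real.sqrt (mfun ε σ) := by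
        apply div_le_div_of_nonneg_left (by norm_num) hm0 hsqle
  _ = gg ε σ := rfl

lemma HH_lower (ε : ℝ) (hε : 0 < ε) {s : ℝ} (h1 : bb/2 ≤ s) (h2 : s < bb) :
    2*ε/(3*bb) * (Real.log (bb/2) - Real.log (bb - s)) ≤ HH ε s := by
  have hmemb2 : bb/2 ∈ Ioo (-bb) bb := ⟨by linarith [bb_pos], by linarith [bb_pos]⟩
  have hmems : s ∈ Ioo (-bb) bb := ⟨by linarith [bb_pos], h2⟩
  have hsplit := intervalIntegral.integral_add_adjacent_intervals
    (gg_int ε hε zero_mem hmemb2) (gg_int ε hε hmemb2 hmems)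
  have hnn : 0 ≤ ∫ σ in (0:ℝ)..(bb/2), gg ε σ := by
    apply intervalIntegral.integral_nonneg (by linarith [bb_pos])
    intro x hx
    exact (gg_pos ε hε (mem_Ioo_iff.mp ⟨by linarith [hx.1, bb_pos], by linarith [hx.2, bb_pos]⟩)).le
  have hcompint : IntervalIntegrable (fun σ => 2*ε/(3*bb) * (bb - σ)⁻¹) volume (bb/2) s := by
    apply ContinuousOn.intervalIntegrable
    apply ContinuousOn.mul continuousOn_const
    apply ContinuousOn.inv₀ (by fun_prop)
    intro x hx
    rw [uIcc_of_le h1] at hx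
    exact ne_of_gt (by linarith [hx.2])
  have hmono' : ∫ σ in (bb/2)..s, 2*ε/(3*bb) * (bb - σ)⁻¹ ≤ ∫ σ in (bb/2)..s, gg ε σ := by
    apply intervalIntegral.integral_mono_on h1 hcompint (gg_int ε hε hmemb2 hmems)
    intro x hx
    exact gg_lower ε hε h2 hx.1 hx.2
  have hcalc : ∫ σ in (bb/2)..s, 2*ε/(3*bb) * (bb - σ)⁻¹
      = 2*ε/(3*bb) * (Real.log (bb/2) - Real.log (bb - s)) := by
    have hderiv : ∀ x ∈ uIcc (bb/2) s,
        HasDerivAt (fun σ => -(2*ε/(3*bb)) * Real.log (bb - σ)) (2*ε/(3*bb) * (bb - x)⁻¹) x := by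
      intro x hx
      rw [uIcc_of_le h1] at hx
      have hne : bb - x ≠ 0 := ne_of_gt (by linarith [hx.2])
      have hin : HasDerivAt (fun σ:ℝ => bb - σ) (-1) x := by
        simpa using (hasDerivAt_id x).const_sub bb
      have := (hin.log hne).const_mul (-(2*ε/(3*bb)))
      refine this.congr_deriv ?_
      field_simp
    rw [intervalIntegral.integral_eq_sub_of_hasDerivAt hderiv hcompint]
    have : bb - bb/2 = bb/2 := by ring
    rw [this]; ring
  show 2*ε/(3*bb) * (Real.log (bb/2) - Real.log (bb - s)) ≤ HH ε s
  unfold HH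
  rw [← hsplit]
  rw [hcalc] at hmono'
  linarith

lemma HH_tendsto (ε : ℝ) (hε : 0 < ε) : Tendsto (HH ε) (𝓝[<] bb) atTop := by
  have hc1 : 0 < 2*ε/(3*bb) := by
    apply div_pos (by linarith) (by linarith [bb_pos])
  have hlog : Tendsto (fun s => Real.log (bb - s)) (𝓝[<] bb) atBot := by
    apply Real.tendsto_log_nhdsGT_zero.comp
    rw [tendsto_nhdsWithin_iff]
    constructor
    · have : Tendsto (fun s : ℝ => bb - s) (𝓝 bb) (𝓝 (bb - bb)) :=
        (continuous_const.sub continuous_id).tendsto bb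
      rw [sub_self] at this
      exact this.mono_left nhdsWithin_le_nhds
    · exact eventually_mem_nhdsWithin.mono (fun s hs => Set.mem_Ioi.2 (sub_pos.2 (Set.mem_Iio.1 hs)))
  have hmain : Tendsto (fun s => 2*ε/(3*bb) * (Real.log (bb/2) - Real.log (bb - s)))
      (𝓝[<] bb) atTop := by
    apply Tendsto.const_mul_atTop hc1
    apply tendsto_atTop_add_const_left
    exact (tendsto_neg_atBot_atTop).comp hlog
  apply tendsto_atTop_mono' _ _ hmain
  filter_upwards [Ioo_mem_nhdsLT_of_mem (⟨by linarith [bb_pos], le_refl bb⟩ : bb ∈ Ioc (bb/2) bb)]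
    with s hs
  exact HH_lower ε hε hs.1.le hs.2

lemma HH_surj (ε : ℝ) (hε : 0 < ε) : ∀ y : ℝ, ∃ s ∈ Ioo (-bb) bb, HH ε s = y := by
  intro y
  obtain ⟨s, hs⟩ := (((HH_tendsto ε hε).eventually (eventually_ge_atTop |y|)).and
    self_mem_nhdsWithin).and (Ioo_mem_nhdsLT_of_mem
      (⟨by linarith [bb_pos], le_refl bb⟩ : bb ∈ Ioc (bb/2) bb)) |>.exists
  obtain ⟨⟨hHs, _⟩, hsIoo⟩ := hs
  have hsmem : s ∈ Ioo (-bb) bb := ⟨by linarith [hsIoo.1, bb_pos], hsIoo.2⟩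
  have hnegmem : -s ∈ Ioo (-bb) bb := ⟨by linarith [hsmem.2], by linarith [hsmem.1]⟩
  have hodd := HH_odd ε s
  have hcont : ContinuousOn (HH ε) (Icc (-s) s) := by
    intro x hx
    have hxm : x ∈ Ioo (-bb) bb := ⟨by linarith [hx.1, hnegmem.1], by linarith [hx.2, hsmem.2]⟩
    exact (hasDerivAt_HH ε hε hxm).continuousAt.continuousWithinAt
  have hy : y ∈ Icc (HH ε (-s)) (HH ε s) := by
    rw [hodd]
    constructor
    · linarith [neg_abs_le y]
    · linarith [le_abs_self y]
  have hle : -s ≤ s := by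
    have : 0 < s := by linarith [hsIoo.1, bb_pos]
    linarith
  obtain ⟨x, hx, hHx⟩ := intermediate_value_Icc hle hcont hy
  exact ⟨x, ⟨by linarith [hx.1, hnegmem.1], by linarith [hx.2, hsmem.2]⟩, hHx⟩

noncomputable def eIso (ε : ℝ) (hε : 0 < ε) : (Ioo (-bb) bb) ≃o ℝ :=
  ((HH_strictMonoOn ε hε).orderIso _ _).trans
    ((OrderIso.setCongr _ _ (by
        apply Set.eq_univ_of_forall
        intro y
        obtain ⟨s, hs, hHs⟩ := HH_surj ε hε y
        exact ⟨s, hs, hHs⟩)).trans OrderIso.Set.univ)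

noncomputable def qq (ε : ℝ) (hε : 0 < ε) (x : ℝ) : ℝ := ((eIso ε hε).symm x : ℝ)

lemma qq_mem (ε : ℝ) (hε : 0 < ε) (x : ℝ) : qq ε hε x ∈ Ioo (-bb) bb :=
  ((eIso ε hε).symm x).2

lemma eIso_apply (ε : ℝ) (hε : 0 < ε) (z : Ioo (-bb) bb) : (eIso ε hε z : ℝ) = HH ε z := rfl

lemma HH_qq (ε : ℝ) (hε : 0 < ε) (x : ℝ) : HH ε (qq ε hε x) = x := by
  have h := eIso_apply ε hε ((eIso ε hε).symm x)
  rw [(eIso ε hε).apply_symm_apply] at h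
  exact h.symm

lemma qq_HH (ε : ℝ) (hε : 0 < ε) {s : ℝ} (hs : s ∈ Ioo (-bb) bb) : qq ε hε (HH ε s) = s := by
  apply (HH_strictMonoOn ε hε).injOn (qq_mem ε hε _) hs
  rw [HH_qq]

lemma qq_cont (ε : ℝ) (hε : 0 < ε) : Continuous (qq ε hε) :=
  continuous_subtype_val.comp (eIso ε hε).symm.continuous

lemma qq_zero (ε : ℝ) (hε : 0 < ε) : qq ε hε 0 = 0 := by
  have h0 : HH ε 0 = 0 := by unfold HH; simp
  have := qq_HH ε hε zero_mem
  rwa [h0] at this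

lemma qq_odd (ε : ℝ) (hε : 0 < ε) (x : ℝ) : qq ε hε (-x) = -qq ε hε x := by
  have hmem := qq_mem ε hε x
  have hneg : -qq ε hε x ∈ Ioo (-bb) bb := ⟨by linarith [hmem.2], by linarith [hmem.1]⟩
  have : HH ε (-qq ε hε x) = -x := by rw [HH_odd, HH_qq]
  rw [← this, qq_HH ε hε hneg]

lemma qq_mono (ε : ℝ) (hε : 0 < ε) : Monotone (qq ε hε) := by
  intro x y hxy
  have := (eIso ε hε).symm.monotone hxy
  exact this

lemma qq_deriv (ε : ℝ) (hε : 0 < ε) (x : ℝ) :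
    HasDerivAt (qq ε hε) ((gg ε (qq ε hε x))⁻¹) x := by
  apply HasDerivAt.of_local_left_inverse (qq_cont ε hε).continuousAt
    (hasDerivAt_HH ε hε (qq_mem ε hε x))
    (gg_pos ε hε (mem_Ioo_iff.mp (qq_mem ε hε x))).ne'
  exact Eventually.of_forall (HH_qq ε hε)

lemma qq_range (ε : ℝ) (hε : 0 < ε) : Set.range (qq ε hε) = Ioo (-bb) bb := by
  apply Set.Subset.antisymm
  · rintro _ ⟨x, rfl⟩; exact qq_mem ε hε x
  · intro s hs; exact ⟨HH ε s, qq_HH ε hε hs⟩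

lemma qq_tendsto_top (ε : ℝ) (hε : 0 < ε) : Tendsto (qq ε hε) atTop (𝓝 bb) := by
  have hbdd : BddAbove (Set.range (qq ε hε)) := by
    rw [qq_range]; exact bddAbove_Ioo
  have := tendsto_atTop_ciSup (qq_mono ε hε) hbdd
  have hsup : ⨆ x, qq ε hε x = bb := by
    rw [iSup, ← Set.image_univ]
    rw [show (fun x => qq ε hε x) '' univ = Set.range (qq ε hε) from (Set.image_univ)]
    rw [qq_range]
    exact csSup_Ioo (by linarith [bb_pos])
  rwa [hsup] at this



section main
variable (ε : ℝ) (hε : 0 < ε)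

noncomputable def uu (x : ℝ) : ℝ := Real.sqrt 2 - (qq ε hε x)^2
noncomputable def uu1 (x : ℝ) : ℝ := -(qq ε hε x * Real.sqrt (mfun ε (qq ε hε x)))

lemma qq_sq_lt (x : ℝ) : (qq ε hε x)^2 < Real.sqrt 2 := mem_Ioo_iff.mp (qq_mem ε hε x)

lemma qq_deriv' (x : ℝ) :
    HasDerivAt (qq ε hε) (Real.sqrt (mfun ε (qq ε hε x)) / 2) x := by
  have h := qq_deriv ε hε x
  rwa [gg, inv_div] at h

lemma uu_deriv (x : ℝ) : HasDerivAt (uu ε hε) (uu1 ε hε x) x := by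
  have h := ((qq_deriv' ε hε x).pow 2).const_sub (Real.sqrt 2)
  refine h.congr_deriv ?_
  rw [uu1]; ring

lemma mfun_zero_val : mfun ε 0 = 2 * Real.sqrt 2 / (1 + ε^2) := by
  have hr0 : rr ε 0 = 0 := by rw [rr]; simp [hs2]
  rw [mfun, hr0, phiP_zero, base]
  simp only [mul_one]
  rw [show ((0:ℝ))^2 = 0 by norm_num]
  rw [sub_zero]
  rw [hs2]
  have hc : (0:ℝ) < 1 + ε^2 := by positivity
  field_simp
  ring

lemma uu1_deriv (x : ℝ) : HasDerivAt (uu1 ε hε) (ffun ε (uu ε hε x)) x := by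
  set σ₀ := qq ε hε x with hσ₀
  have hmem := qq_sq_lt ε hε x
  have hm0 : 0 < mfun ε σ₀ := mfun_pos ε hε hmem
  obtain ⟨dm, hm⟩ := hasDerivAt_mfun ε hε hmem
  have hsne : Real.sqrt (mfun ε σ₀) ≠ 0 := (Real.sqrt_pos.2 hm0).ne'
  have hsq : Real.sqrt (mfun ε σ₀) * Real.sqrt (mfun ε σ₀) = mfun ε σ₀ :=
    Real.mul_self_sqrt hm0.le
  have hs : HasDerivAt (fun σ => Real.sqrt (mfun ε σ)) (dm / (2 * Real.sqrt (mfun ε σ₀))) σ₀ :=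
    hm.sqrt hm0.ne'
  have hP : HasDerivAt (fun σ => -(σ * Real.sqrt (mfun ε σ)))
      (-(Real.sqrt (mfun ε σ₀) + σ₀ * (dm / (2 * Real.sqrt (mfun ε σ₀))))) σ₀ := by
    have := ((hasDerivAt_id σ₀).mul hs).neg
    refine this.congr_deriv ?_
    simp only [id_eq]
    ring
  have hcomp := hP.comp x (qq_deriv' ε hε x)
  have hval : -(Real.sqrt (mfun ε σ₀) + σ₀ * (dm / (2 * Real.sqrt (mfun ε σ₀))))
      * (Real.sqrt (mfun ε σ₀) / 2) = ffun ε (uu ε hε x) := by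
    have hexp : -(Real.sqrt (mfun ε σ₀) + σ₀ * (dm / (2 * Real.sqrt (mfun ε σ₀))))
        * (Real.sqrt (mfun ε σ₀) / 2) = -(mfun ε σ₀ / 2 + σ₀ * dm / 4) := by
      set S := Real.sqrt (mfun ε σ₀) with hS
      have hdiv : dm / (2*S) * S = dm / 2 := by field_simp
      calc -(S + σ₀*(dm/(2*S))) * (S/2) = -(S*S/2 + σ₀ * (dm/(2*S)*S)/2) := by ring
      _ = -(mfun ε σ₀/2 + σ₀*dm/4) := by rw [hdiv, hsq]; ring
    rw [hexp]
    rcases eq_or_ne σ₀ 0 with h0 | h0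
    · rw [h0]
      have huval : uu ε hε x = Real.sqrt 2 := by rw [uu, ← hσ₀, h0]; ring
      rw [huval, ffun, mfun_zero_val, hs2]
      have hc : (0:ℝ) < 1 + ε^2 := by positivity
      field_simp
      ring
    · have hLHS : HasDerivAt (fun σ => σ^2 * mfun ε σ) (2*σ₀*mfun ε σ₀ + σ₀^2*dm) σ₀ := by
        have := (hasDerivAt_pow 2 σ₀).mul hm
        refine this.congr_deriv ?_
        ring
      have heqev : (fun σ => σ^2 * mfun ε σ) =ᶠ[𝓝 σ₀]
          (fun σ => Wfun ε (Real.sqrt 2 - σ^2)) := by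
        filter_upwards [isOpen_Ioo.mem_nhds (qq_mem ε hε x)] with σ hσ
        exact key_id ε hε (mem_Ioo_iff.mp hσ).le
      have hLHS2 := (hasDerivAt_nn ε hε σ₀).congr_of_eventuallyEq heqev
      have huniq := hLHS.unique hLHS2
      have h5 : 2 * mfun ε σ₀ + σ₀ * dm = -4 * ffun ε (Real.sqrt 2 - σ₀^2) := by
        apply mul_left_cancel₀ h0
        linear_combination huniq
      have huval : uu ε hε x = Real.sqrt 2 - σ₀^2 := rfl
      rw [huval]
      linarith
  rw [← hval]
  exact hcomp

end main

/-- for every ε > 0 the regularized equation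
u'' = u(1 − u²)/((1 − u²)² + ε²) has an even, C², positive solitary wave with
maximum √2, decaying at infinity and lying at the zero level of the
first-order invariant (1/2)u'² + V_ε(u) = 0, where
V_ε(ξ) = (1/2)log(√((1 − ξ²)² + ε²)/√(1 + ε²)). -/
theorem exists_regularized_solitary_wave (ε : ℝ) (hε : 0 < ε) :
    ∃ u : ℝ → ℝ,
      (∀ x : ℝ, u (-x) = u x) ∧
      ContDiff ℝ 2 u ∧
      u 0 = Real.sqrt 2 ∧
      (∀ x : ℝ, 0 < u x ∧ u x ≤ Real.sqrt 2) ∧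
      Tendsto u (cocompact ℝ) (nhds 0) ∧
      (∀ x : ℝ, deriv (deriv u) x =
        u x * (1 - u x ^ 2) / ((1 - u x ^ 2) ^ 2 + ε ^ 2)) ∧
      (∀ x : ℝ, (1 / 2) * (deriv u x) ^ 2 +
        (1 / 2) * Real.log (Real.sqrt ((1 - u x ^ 2) ^ 2 + ε ^ 2) /
          Real.sqrt (1 + ε ^ 2)) = 0) := by
  have heven : ∀ x : ℝ, uu ε hε (-x) = uu ε hε x := by
    intro x; simp only [uu, qq_odd]; ring
  have hdiffu : Differentiable ℝ (uu ε hε) := fun x => (uu_deriv ε hε x).differentiableAt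
  have hderiv_u : deriv (uu ε hε) = uu1 ε hε := funext fun x => (uu_deriv ε hε x).deriv
  have hdiffu1 : Differentiable ℝ (uu1 ε hε) := fun x => (uu1_deriv ε hε x).differentiableAt
  have hderiv_u1 : deriv (uu1 ε hε) = fun x => ffun ε (uu ε hε x) :=
    funext fun x => (uu1_deriv ε hε x).deriv
  have hu : Continuous (uu ε hε) := hdiffu.continuous
  have hcontf : Continuous fun x => ffun ε (uu ε hε x) := by
    simp only [ffun]
    have h1 : Continuous fun x => uu ε hε x * (1 - uu ε hε x^2) :=
      Continuous.mul hu (continuous_const.sub (hu.pow 2))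
    have h2 : Continuous fun x => (1 - uu ε hε x^2)^2 + ε^2 :=
      ((continuous_const.sub (hu.pow 2)).pow 2).add continuous_const
    exact h1.div h2 fun x => by positivity
  refine ⟨uu ε hε, heven, ?_, ?_, ?_, ?_, ?_, ?_⟩
  · -- ContDiff 2
    rw [show ((2 : WithTop ℕ∞)) = 1 + 1 by norm_num, contDiff_succ_iff_deriv]
    refine ⟨hdiffu, by simp, ?_⟩
    rw [hderiv_u]
    exact contDiff_one_iff_deriv.2 ⟨hdiffu1, by rw [hderiv_u1]; exact hcontf⟩
  · simp [uu, qq_zero]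
  · intro x
    constructor
    · have := qq_sq_lt ε hε x; simp only [uu]; linarith
    · simp only [uu]; nlinarith [sq_nonneg (qq ε hε x)]
  · rw [cocompact_eq_atBot_atTop, tendsto_sup]
    have htop : Tendsto (uu ε hε) atTop (𝓝 0) := by
      have h1 : Tendsto (fun x => (qq ε hε x)^2) atTop (𝓝 (bb^2)) :=
        (qq_tendsto_top ε hε).pow 2
      have h2 := (tendsto_const_nhds (x := Real.sqrt 2) (f := atTop)).sub h1
      rw [bb_sq, sub_self] at h2
      exact h2
    constructor
    · have := htop.comp tendsto_neg_atBot_atTop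
      have heq : (fun x => uu ε hε (-x)) = uu ε hε := funext heven
      rwa [show (uu ε hε ∘ fun x => -x) = fun x => uu ε hε (-x) from rfl, heq] at this
    · exact htop
  · intro x
    rw [hderiv_u]
    exact (uu1_deriv ε hε x).deriv
  · intro x
    have hd : deriv (uu ε hε) x = uu1 ε hε x := by rw [hderiv_u]
    rw [hd]
    have hm0 := mfun_pos ε hε (qq_sq_lt ε hε x)
    have hsq : (uu1 ε hε x)^2 = Wfun ε (uu ε hε x) := by
      have h1 : (uu1 ε hε x)^2 = (qq ε hε x)^2 * (Real.sqrt (mfun ε (qq ε hε x)))^2 := by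
        rw [uu1]; ring
      rw [h1, Real.sq_sqrt hm0.le]
      exact key_id ε hε (qq_sq_lt ε hε x).le
    have hA : (0:ℝ) ≤ (1 - uu ε hε x^2)^2 + ε^2 := by positivity
    have hB : (0:ℝ) < 1 + ε^2 := by positivity
    rw [show Real.sqrt ((1 - uu ε hε x^2)^2 + ε^2) / Real.sqrt (1 + ε^2)
        = Real.sqrt (((1 - uu ε hε x^2)^2 + ε^2) / (1 + ε^2)) from (Real.sqrt_div hA _).symm]
    rw [Real.log_sqrt (div_nonneg hA hB.le)]
    rw [hsq]
    show (1/2) * Wfun ε (uu ε hε x) + 1/2 * (Real.log (((1 - uu ε hε x^2)^2 + ε^2) / (1+ε^2)) / 2) = 0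
    rw [Wfun]
    ring
end

section
/- Let I ⊆ ℝ be an open interval and let u : I → ℝ be three times continuously differentiable with u(x)² ≠ 1 for all x ∈ I and (1 − u(x)²)·u''(x) = u(x) on I. Define v(x) = (1/2)·x·u'(x). Then for all x ∈ I: −(1 − u(x)²)·v''(x) + ((1 + u(x)²)/(1 − u(x)²))·v(x) = −u(x). That is, v = (1/2)x·u' solves L₊v = −u, where L₊ = −(1 − u²)∂_x² + (1 + u²)/(1 − u²). -/
open Set

/-- the explicit generalized eigenvector: if u is C³ on an open
interval I, u² ≠ 1 on I and (1 − u²)u'' = u on I, then v = (1/2)·x·u'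
solves L₊v = −u, i.e. −(1 − u²)v'' + ((1 + u²)/(1 − u²))v = −u on I. -/
theorem generalized_eigenvector_solves
    (I : Set ℝ) (hI : IsOpen I) (hconn : IsPreconnected I)
    (u u' u'' u''' : ℝ → ℝ)
    (hu : ∀ x ∈ I, HasDerivAt u (u' x) x)
    (hu' : ∀ x ∈ I, HasDerivAt u' (u'' x) x)
    (hu'' : ∀ x ∈ I, HasDerivAt u'' (u''' x) x)
    (hu''' : ContinuousOn u''' I)
    (hne : ∀ x ∈ I, u x ^ 2 ≠ 1)
    (heq : ∀ x ∈ I, (1 - u x ^ 2) * u'' x = u x) :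
    ∀ x ∈ I,
      -(1 - u x ^ 2) * deriv (deriv (fun y : ℝ => (1 / 2) * y * u' y)) x +
          ((1 + u x ^ 2) / (1 - u x ^ 2)) * ((1 / 2) * x * u' x) = -u x := by
  intro x hx
  set v : ℝ → ℝ := fun y : ℝ => (1 / 2) * y * u' y with hv
  set w : ℝ → ℝ := fun y : ℝ => (1 / 2) * u' y + (1 / 2) * y * u'' y with hw
  -- deriv v = w on I
  have hdv : ∀ y ∈ I, HasDerivAt v (w y) y := by
    intro y hy
    have h1 : HasDerivAt (fun z : ℝ => (1 / 2) * z) (1 / 2) y := by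
      simpa using (hasDerivAt_id y).const_mul (1 / 2 : ℝ)
    have h2 := h1.mul (hu' y hy)
    exact h2
  have hdvw : ∀ y ∈ I, deriv v y = w y := fun y hy => (hdv y hy).deriv
  have hddv : deriv (deriv v) x = u'' x + (1 / 2) * x * u''' x := by
    have hEq : deriv v =ᶠ[nhds x] w :=
      Filter.eventuallyEq_of_mem (hI.mem_nhds hx) hdvw
    rw [Filter.EventuallyEq.deriv_eq hEq]
    have h1 : HasDerivAt (fun z : ℝ => (1 / 2) * u' z) ((1 / 2) * u'' x) x :=
      (hu' x hx).const_mul _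
    have h2 : HasDerivAt (fun z : ℝ => (1 / 2) * z) (1 / 2) x := by
      simpa using (hasDerivAt_id x).const_mul (1 / 2 : ℝ)
    have h3 := h2.mul (hu'' x hx)
    have := (h1.add h3).deriv
    rw [show w = fun z => (1 / 2) * u' z + (1 / 2) * z * u'' z from rfl]
    rw [show (fun z => (1 / 2) * u' z + (1 / 2) * z * u'' z) = (fun z : ℝ => (1 / 2) * u' z) + (fun z : ℝ => (1 / 2) * z) * u'' from rfl, this]; ring
  -- differentiate the stationary equation
  have hkey : (1 - u x ^ 2) * u''' x = u' x + 2 * u x * u' x * u'' x := by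
    set g : ℝ → ℝ := fun y => (1 - u y ^ 2) * u'' y - u y with hg
    have hdg : HasDerivAt g
        ((-(2 * u x * u' x)) * u'' x + (1 - u x ^ 2) * u''' x - u' x) x := by
      have h1 : HasDerivAt (fun y => 1 - u y ^ 2) (-(2 * u x * u' x)) x := by
        have := ((hu x hx).pow 2).const_sub 1
        simpa [mul_comm, mul_assoc, mul_left_comm] using this
      exact (h1.mul (hu'' x hx)).sub (hu x hx)
    have hg0 : ∀ y ∈ I, g y = 0 := fun y hy => by simp [hg, heq y hy]
    have hEq : g =ᶠ[nhds x] fun _ => (0 : ℝ) :=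
      Filter.eventuallyEq_of_mem (hI.mem_nhds hx) hg0
    have : deriv g x = 0 := by
      rw [Filter.EventuallyEq.deriv_eq hEq]; simp
    rw [hdg.deriv] at this
    linarith
  rw [hddv]
  have hne1 : 1 - u x ^ 2 ≠ 0 := sub_ne_zero.mpr (Ne.symm (hne x hx))
  have h2 := heq x hx
  field_simp
  linear_combination (-2 * (1 - u x ^ 2) - 2 * x * u x * u' x) * h2 +
    (-x * (1 - u x ^ 2)) * hkey
end

section
/- Let u : ℝ → ℝ be the cusped soliton: a continuous even function with u(0) = 1, 0 < u(x) < 1 for x ≠ 0, u(x) → 0 as |x| → ∞, twice continuously differentiable on ℝ \ {0}, satisfying (1 − u(x)²)·u''(x) = u(x) and u'(x)² = −log(1 − u(x)²) for all x ≠ 0. Then the function x ↦ x·u(x)·u'(x)/(1 − u(x)²) is integrable on ℝ, the function x ↦ log(1 − u(x)²) is integrable on ℝ, and ∫_ℝ x·u(x)·u'(x)/(1 − u(x)²) dx = (1/2)·∫_ℝ log(1 − u(x)²) dx, which is strictly negative; in particular this quantity is nonzero. -/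
open MeasureTheory Filter Set Topology

set_option linter.unusedSectionVars false
set_option maxHeartbeats 1000000

lemma even_integrable' {F : ℝ → ℝ} (hFe : ∀ x, F (-x) = F x)
    (hFi : IntegrableOn F (Ioi (0:ℝ))) : Integrable F := by
  have m : MeasurableEmbedding fun x : ℝ => -x := (Homeomorph.neg ℝ).measurableEmbedding
  have int_Iic : IntegrableOn F (Iic 0) := by
    rw [← Measure.map_neg_eq_self (volume : Measure ℝ), m.integrableOn_map_iff]
    have h1 : (F ∘ fun x : ℝ => -x) = F := funext fun x => hFe x
    rw [h1]
    have h2 : (fun x : ℝ => -x) ⁻¹' (Iic 0) = Ici 0 := by ext x; simp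
    rw [h2]
    exact Iff.mpr integrableOn_Ici_iff_integrableOn_Ioi hFi
  have := int_Iic.union hFi
  rwa [Iic_union_Ioi, integrableOn_univ] at this

lemma even_integral' {F : ℝ → ℝ} (hFe : ∀ x, F (-x) = F x) :
    ∫ x, F x = 2 * ∫ x in Ioi (0:ℝ), F x := by
  rw [← integral_comp_abs (f := F)]
  congr 1
  ext x
  rcases le_or_gt 0 x with h | h
  · rw [abs_of_nonneg h]
  · rw [abs_of_neg h, hFe]


section Test
variable
    (u : ℝ → ℝ)
    (hcont : Continuous u)
    (heven : ∀ x : ℝ, u (-x) = u x)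
    (h0 : u 0 = 1)
    (hrange : ∀ x : ℝ, x ≠ 0 → 0 < u x ∧ u x < 1)
    (hdecay : Tendsto u (cocompact ℝ) (nhds 0))
    (hsmooth : ContDiffOn ℝ 2 u {(0 : ℝ)}ᶜ)
    (heq : ∀ x : ℝ, x ≠ 0 → (1 - u x ^ 2) * deriv (deriv u) x = u x)
    (hinv : ∀ x : ℝ, x ≠ 0 → (deriv u x) ^ 2 = -Real.log (1 - u x ^ 2))

include hrange in
lemma hv_pos : ∀ x : ℝ, x ≠ 0 → 0 < 1 - u x ^ 2 := by
  intro x hx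
  have h := hrange x hx
  nlinarith [h.1, h.2]

include hrange in
lemma hv_lt1 : ∀ x : ℝ, x ≠ 0 → 1 - u x ^ 2 < 1 := by
  intro x hx
  have h := hrange x hx
  nlinarith [h.1]

include hrange in
lemma hg_pos : ∀ x : ℝ, x ≠ 0 → 0 < -Real.log (1 - u x ^ 2) := by
  intro x hx
  have := Real.log_neg (hv_pos u hrange x hx) (hv_lt1 u hrange x hx)
  linarith

include hsmooth in
lemma hu_diff : ∀ x : ℝ, x ≠ 0 → HasDerivAt u (deriv u x) x := by
  intro x hx
  have h1 : ContDiffAt ℝ 2 u x :=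
    hsmooth.contDiffAt (isOpen_compl_singleton.mem_nhds hx)
  exact (h1.differentiableAt (by norm_num)).hasDerivAt

include hsmooth in
lemma hu'_cont : ContinuousOn (deriv u) {(0:ℝ)}ᶜ :=
  hsmooth.continuousOn_deriv_of_isOpen isOpen_compl_singleton (by norm_num)

include hsmooth heq hrange in
lemma hu''_diff : ∀ x : ℝ, x ≠ 0 →
    HasDerivAt (deriv u) (u x / (1 - u x ^ 2)) x := by
  intro x hx
  have h1 : ContDiffOn ℝ 1 (deriv u) {(0:ℝ)}ᶜ :=
    hsmooth.deriv_of_isOpen isOpen_compl_singleton (by norm_num)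
  have h2 : DifferentiableAt ℝ (deriv u) x :=
    (h1.contDiffAt (isOpen_compl_singleton.mem_nhds hx)).differentiableAt (by norm_num)
  have h3 := h2.hasDerivAt
  have hv := (hv_pos u hrange x hx).ne'
  have h4 : deriv (deriv u) x = u x / (1 - u x ^ 2) := by
    field_simp
    linarith [heq x hx]
  rwa [h4] at h3
end Test


section Test
variable
    (u : ℝ → ℝ)
    (hcont : Continuous u)
    (heven : ∀ x : ℝ, u (-x) = u x)
    (h0 : u 0 = 1)
    (hrange : ∀ x : ℝ, x ≠ 0 → 0 < u x ∧ u x < 1)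
    (hdecay : Tendsto u (cocompact ℝ) (nhds 0))
    (hsmooth : ContDiffOn ℝ 2 u {(0 : ℝ)}ᶜ)
    (heq : ∀ x : ℝ, x ≠ 0 → (1 - u x ^ 2) * deriv (deriv u) x = u x)
    (hinv : ∀ x : ℝ, x ≠ 0 → (deriv u x) ^ 2 = -Real.log (1 - u x ^ 2))

include hrange hsmooth in
lemma hg_hasDeriv : ∀ x : ℝ, x ≠ 0 →
    HasDerivAt (fun y => -Real.log (1 - u y ^ 2))
      (2 * u x * deriv u x / (1 - u x ^ 2)) x := by
  intro x hx
  have hv : (0:ℝ) < 1 - u x ^ 2 := by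
    have h := hrange x hx; nlinarith [h.1, h.2]
  have hu := hsmooth.contDiffAt (isOpen_compl_singleton.mem_nhds hx)
  have hd : HasDerivAt u (deriv u x) x := (hu.differentiableAt (by norm_num)).hasDerivAt
  have h1 : HasDerivAt (fun y => 1 - u y ^ 2)
      (0 - (2:ℕ) * u x ^ (2-1) * deriv u x) x :=
    (hasDerivAt_const x (1:ℝ)).sub (hd.pow 2)
  have h2 : HasDerivAt (fun y => -Real.log (1 - u y ^ 2)) _ x := (h1.log hv.ne').neg
  convert h2 using 1
  norm_num
  try ring

include heven in
lemma hodd : ∀ x : ℝ, deriv u (-x) = -deriv u x := by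
  intro x
  have h : (fun y => u (-y)) = u := funext heven
  have h2 := deriv_comp_neg (f := u) (x := x)
  rw [h] at h2
  linarith

include hrange hinv in
lemma hu'_ne : ∀ x : ℝ, x ≠ 0 → deriv u x ≠ 0 := by
  intro x hx h
  have h1 := hinv x hx
  rw [h, zero_pow (by norm_num)] at h1
  have h2 : (0:ℝ) < -Real.log (1 - u x ^ 2) := by
    have hv : (0:ℝ) < 1 - u x ^ 2 := by have h := hrange x hx; nlinarith [h.1, h.2]
    have hv1 : 1 - u x ^ 2 < 1 := by have h := hrange x hx; nlinarith [h.1]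
    have := Real.log_neg hv hv1; linarith
  linarith
end Test


section Test
variable
    (u : ℝ → ℝ)
    (hcont : Continuous u)
    (hrange : ∀ x : ℝ, x ≠ 0 → 0 < u x ∧ u x < 1)
    (hdecay : Tendsto u (cocompact ℝ) (nhds 0))
    (hu'_cont : ContinuousOn (deriv u) {(0:ℝ)}ᶜ)
    (hu'_ne : ∀ x : ℝ, x ≠ 0 → deriv u x ≠ 0)

include hcont hrange hdecay hu'_cont hu'_ne in
lemma hu'_neg : ∀ x : ℝ, 0 < x → deriv u x < 0 := by
  intro x hx
  by_contra h
  push_neg at h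
  have hpos : 0 < deriv u x := lt_of_le_of_ne h (Ne.symm (hu'_ne x hx.ne'))
  have hall : ∀ y : ℝ, 0 < y → 0 < deriv u y := by
    intro y hy
    rcases (hu'_ne y hy.ne').lt_or_gt with hneg | hpos'
    · exfalso
      have hsub : uIcc x y ⊆ {(0:ℝ)}ᶜ := by
        intro z hz
        have h1 : min x y ≤ z := hz.1
        have h2 : 0 < min x y := lt_min hx hy
        simp only [mem_compl_iff, mem_singleton_iff]
        linarith
      have hcont' : ContinuousOn (deriv u) (uIcc x y) := hu'_cont.mono hsub
      have h0mem : (0:ℝ) ∈ uIcc (deriv u x) (deriv u y) := by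
        rw [mem_uIcc]; right; exact ⟨hneg.le, hpos.le⟩
      obtain ⟨c, hc, hc0⟩ := intermediate_value_uIcc hcont' h0mem
      have hcpos : 0 < c := lt_of_lt_of_le (lt_min hx hy) hc.1
      exact hu'_ne c hcpos.ne' hc0
    · exact hpos'
  have hmono : StrictMonoOn u (Ici x) := by
    apply strictMonoOn_of_deriv_pos (convex_Ici x) hcont.continuousOn
    intro y hy
    rw [interior_Ici] at hy
    exact hall y (hx.trans hy)
  have hT : Tendsto u atTop (nhds 0) := by
    refine hdecay.mono_left ?_
    rw [cocompact_eq_atBot_atTop]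
    exact le_sup_right
  have hle : u x ≤ 0 := by
    refine ge_of_tendsto hT ?_
    filter_upwards [eventually_ge_atTop (x + 1)] with y hy
    exact (hmono (le_refl x : x ∈ Ici x) (by simp only [mem_Ici]; linarith : y ∈ Ici x)
      (by linarith)).le
  exact absurd hle (not_le.2 (hrange x hx.ne').1)
end Test


section Test
variable
    (u : ℝ → ℝ)
    (hcont : Continuous u)
    (hrange : ∀ x : ℝ, x ≠ 0 → 0 < u x ∧ u x < 1)
    (hinv : ∀ x : ℝ, x ≠ 0 → (deriv u x) ^ 2 = -Real.log (1 - u x ^ 2))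
    (hu'_neg : ∀ x : ℝ, 0 < x → deriv u x < 0)
    (hg_hasDeriv : ∀ x : ℝ, x ≠ 0 →
      HasDerivAt (fun y => -Real.log (1 - u y ^ 2))
        (2 * u x * deriv u x / (1 - u x ^ 2)) x)

include hinv hu'_neg in
lemma hsqrt : ∀ x : ℝ, 0 < x →
    Real.sqrt (-Real.log (1 - u x ^ 2)) = -(deriv u x) := by
  intro x hx
  rw [← hinv x hx.ne', Real.sqrt_sq_eq_abs, abs_of_neg (hu'_neg x hx)]

include hcont hrange in
lemma hg_cont : ContinuousOn (fun y => -Real.log (1 - u y ^ 2)) {(0:ℝ)}ᶜ := by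
  apply ContinuousOn.neg
  apply ContinuousOn.log
  · exact (continuousOn_const.sub ((hcont.continuousOn).pow 2))
  · intro x hx
    have h := hrange x hx
    nlinarith [h.1, h.2]

include hcont hrange hu'_neg hg_hasDeriv in
lemma hganti : StrictAntiOn (fun y => -Real.log (1 - u y ^ 2)) (Ioi (0:ℝ)) := by
  apply strictAntiOn_of_deriv_neg (convex_Ioi 0)
  · exact (hg_cont u hcont hrange).mono (fun z hz => by
      simp only [mem_compl_iff, mem_singleton_iff]; exact ne_of_gt hz)
  · intro x hx
    rw [interior_Ioi] at hx
    rw [(hg_hasDeriv x hx.ne').deriv]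
    have h := hrange x hx.ne'
    have hv : (0:ℝ) < 1 - u x ^ 2 := by nlinarith [h.1, h.2]
    have := hu'_neg x hx
    apply div_neg_of_neg_of_pos _ hv
    nlinarith [h.1]

include hrange hinv hu'_neg in
lemma hu'_le : ∀ x : ℝ, 0 < x → deriv u x ≤ -u x := by
  intro x hx
  have h := hrange x hx.ne'
  have hv : (0:ℝ) < 1 - u x ^ 2 := by nlinarith [h.1, h.2]
  have hlog : Real.log (1 - u x ^ 2) ≤ (1 - u x ^ 2) - 1 :=
    Real.log_le_sub_one_of_pos hv
  have h2 : u x ^ 2 ≤ (deriv u x) ^ 2 := by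
    rw [hinv x hx.ne']; linarith
  nlinarith [hu'_neg x hx, h.1]
end Test


section Test
variable
    (u : ℝ → ℝ)
    (hcont : Continuous u)
    (hrange : ∀ x : ℝ, x ≠ 0 → 0 < u x ∧ u x < 1)
    (hdecay : Tendsto u (cocompact ℝ) (nhds 0))
    (hu_diff : ∀ x : ℝ, x ≠ 0 → HasDerivAt u (deriv u x) x)
    (hu'_le : ∀ x : ℝ, 0 < x → deriv u x ≤ -u x)
    (hinv : ∀ x : ℝ, x ≠ 0 → (deriv u x) ^ 2 = -Real.log (1 - u x ^ 2))
    (hu'_neg : ∀ x : ℝ, 0 < x → deriv u x < 0)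

include hcont hu_diff hu'_le in
lemma hu_decay : ∀ x : ℝ, 1 ≤ x → u x ≤ (u 1 * Real.exp 1) * Real.exp (-x) := by
  have hanti : AntitoneOn (fun x => Real.exp x * u x) (Ici 1) := by
    apply antitoneOn_of_deriv_nonpos (convex_Ici 1)
    · exact (Real.continuous_exp.continuousOn).mul hcont.continuousOn
    · intro x hx
      rw [interior_Ici] at hx
      have hx0 : (0:ℝ) < x := lt_trans one_pos hx
      exact (((Real.hasDerivAt_exp x).mul
        (hu_diff x hx0.ne')).differentiableAt).differentiableWithinAt
    · intro x hx
      rw [interior_Ici] at hx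
      have hx0 : (0:ℝ) < x := lt_trans one_pos hx
      rw [HasDerivAt.deriv (f := fun x => Real.exp x * u x) ((Real.hasDerivAt_exp x).mul (hu_diff x hx0.ne'))]
      have h1 := hu'_le x hx0
      have h2 := Real.exp_pos x
      nlinarith
  intro x hx
  have h := hanti (self_mem_Ici : (1:ℝ) ∈ Ici 1) (mem_Ici.2 hx) hx
  simp only at h
  have key : Real.exp (-x) * (Real.exp x * u x) ≤ Real.exp (-x) * (Real.exp 1 * u 1) :=
    mul_le_mul_of_nonneg_left h (Real.exp_pos _).le
  calc u x = Real.exp (-x) * (Real.exp x * u x) := by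
        rw [← mul_assoc, ← Real.exp_add]; simp
    _ ≤ Real.exp (-x) * (Real.exp 1 * u 1) := key
    _ = (u 1 * Real.exp 1) * Real.exp (-x) := by ring
end Test


section Test
variable
    (u : ℝ → ℝ)
    (hrange : ∀ x : ℝ, x ≠ 0 → 0 < u x ∧ u x < 1)
    (hdecay : Tendsto u (cocompact ℝ) (nhds 0))
    (hinv : ∀ x : ℝ, x ≠ 0 → (deriv u x) ^ 2 = -Real.log (1 - u x ^ 2))
    (hu'_neg : ∀ x : ℝ, 0 < x → deriv u x < 0)
    (hu_decay : ∀ x : ℝ, 1 ≤ x → u x ≤ (u 1 * Real.exp 1) * Real.exp (-x))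

include hdecay in
lemma hA_ex : ∃ A : ℝ, 1 ≤ A ∧ ∀ x : ℝ, A ≤ x → u x ≤ 1/2 := by
  have hT : Tendsto u atTop (nhds 0) := by
    refine hdecay.mono_left ?_
    rw [cocompact_eq_atBot_atTop]
    exact le_sup_right
  have h := hT.eventually (gt_mem_nhds (by norm_num : (0:ℝ) < 1/2))
  rw [eventually_atTop] at h
  obtain ⟨A₀, hA₀⟩ := h
  exact ⟨max A₀ 1, le_max_right _ _,
    fun x hx => (hA₀ x ((le_max_left _ _).trans hx)).le⟩

include hrange hu_decay in
lemma hg_tail : ∀ A : ℝ, 1 ≤ A → (∀ x : ℝ, A ≤ x → u x ≤ 1/2) →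
    ∀ x : ℝ, A ≤ x →
    -Real.log (1 - u x ^ 2) ≤
      4/3 * (u 1 * Real.exp 1)^2 * Real.exp (-(2*x)) := by
  intro A hA1 hAhalf x hx
  have hx1 : (1:ℝ) ≤ x := hA1.trans hx
  have hx0 : x ≠ 0 := by positivity
  have hu := hrange x hx0
  have hhalf := hAhalf x hx
  have hv : (3:ℝ)/4 ≤ 1 - u x ^ 2 := by nlinarith [hu.1]
  have hvpos : (0:ℝ) < 1 - u x ^ 2 := by linarith
  have hlog : Real.log (1 - u x ^ 2)⁻¹ ≤ (1 - u x ^ 2)⁻¹ - 1 :=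
    Real.log_le_sub_one_of_pos (by positivity)
  rw [Real.log_inv] at hlog
  have hinvle : (1 - u x ^ 2)⁻¹ ≤ 4/3 := by
    rw [inv_le_comm₀ hvpos (by norm_num)]
    linarith
  have h1 : -Real.log (1 - u x ^ 2) ≤ u x ^ 2 * (4/3) := by
    have h2 : (1 - u x ^ 2)⁻¹ - 1 = u x ^ 2 * (1 - u x ^ 2)⁻¹ := by
      field_simp
      ring
    rw [h2] at hlog
    have : u x ^ 2 * (1 - u x ^ 2)⁻¹ ≤ u x ^ 2 * (4/3) := by
      apply mul_le_mul_of_nonneg_left hinvle (by positivity)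
    linarith
  have hud := hu_decay x hx1
  have hsq : u x ^ 2 ≤ (u 1 * Real.exp 1)^2 * Real.exp (-(2*x)) := by
    have he : Real.exp (-(2*x)) = Real.exp (-x) * Real.exp (-x) := by
      rw [← Real.exp_add]; ring_nf
    rw [he]
    nlinarith [hu.1, Real.exp_pos (-x)]
  nlinarith
end Test


section Test
variable
    (u : ℝ → ℝ)
    (hcont : Continuous u)
    (h0 : u 0 = 1)
    (hrange : ∀ x : ℝ, x ≠ 0 → 0 < u x ∧ u x < 1)
    (hu_diff : ∀ x : ℝ, x ≠ 0 → HasDerivAt u (deriv u x) x)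
    (hu'_neg : ∀ x : ℝ, 0 < x → deriv u x < 0)
    (hsqrt : ∀ x : ℝ, 0 < x →
      Real.sqrt (-Real.log (1 - u x ^ 2)) = -(deriv u x))
    (hganti : StrictAntiOn (fun y => -Real.log (1 - u y ^ 2)) (Ioi (0:ℝ)))
    (hg_pos : ∀ x : ℝ, x ≠ 0 → 0 < -Real.log (1 - u x ^ 2))

include hcont h0 hrange hu_diff hu'_neg hsqrt hganti in
lemma hMVT : ∀ δ : ℝ, 0 < δ → (∀ y : ℝ, |y| ≤ δ → 1/2 ≤ u y) →
    ∀ x ∈ Ioc (0:ℝ) δ,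
    x * Real.sqrt (-Real.log (1 - u x ^ 2)) ≤ 1 - u x ^ 2 := by
  intro δ hδ hhalf x hx
  obtain ⟨hx0, hxδ⟩ := hx
  have hvc : ContinuousOn (fun y => 1 - u y ^ 2) (Icc 0 x) :=
    (continuousOn_const.sub (hcont.continuousOn.pow 2))
  have hvd : DifferentiableOn ℝ (fun y => 1 - u y ^ 2) (Ioo 0 x) := by
    intro y hy
    exact ((differentiableAt_const (1:ℝ)).sub
      ((hu_diff y hy.1.ne').differentiableAt.pow 2)).differentiableWithinAt
  obtain ⟨c, hc, hceq⟩ := exists_deriv_eq_slope (fun y => 1 - u y ^ 2) hx0 hvc hvd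
  have hc0 : 0 < c := hc.1
  have hcx : c < x := hc.2
  have hder : deriv (fun y => 1 - u y ^ 2) c = -(2 * u c * deriv u c) := by
    have h1 : HasDerivAt (fun y => 1 - u y ^ 2)
        (0 - (2:ℕ) * u c ^ (2-1) * deriv u c) c :=
      (hasDerivAt_const c (1:ℝ)).sub ((hu_diff c hc0.ne').pow 2)
    rw [h1.deriv]
    push_cast
    ring
  have hv0 : (1:ℝ) - u 0 ^ 2 = 0 := by rw [h0]; ring
  rw [hder, hv0] at hceq
  have huc : 1/2 ≤ u c := hhalf c (by rw [abs_of_pos hc0]; linarith)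
  have hgle : -Real.log (1 - u x ^ 2) ≤ -Real.log (1 - u c ^ 2) :=
    (hganti (mem_Ioi.2 hc0) (mem_Ioi.2 hx0) hcx).le
  have hsle : Real.sqrt (-Real.log (1 - u x ^ 2)) ≤ -(deriv u c) := by
    rw [← hsqrt c hc0]
    exact Real.sqrt_le_sqrt hgle
  have hs_nonneg : 0 ≤ Real.sqrt (-Real.log (1 - u x ^ 2)) := Real.sqrt_nonneg _
  have hslope : (1 - u x ^ 2 - 0) / (x - 0) = (1 - u x ^ 2) / x := by ring_nf
  rw [hslope] at hceq
  have hkey : Real.sqrt (-Real.log (1 - u x ^ 2)) ≤ (1 - u x ^ 2) / x := by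
    rw [← hceq]
    nlinarith [hu'_neg c hc0]
  calc x * Real.sqrt (-Real.log (1 - u x ^ 2))
      ≤ x * ((1 - u x ^ 2) / x) := by
        apply mul_le_mul_of_nonneg_left hkey hx0.le
    _ = 1 - u x ^ 2 := by field_simp
end Test


section Test
variable
    (u : ℝ → ℝ)
    (hcont : Continuous u)
    (h0 : u 0 = 1)
    (hrange : ∀ x : ℝ, x ≠ 0 → 0 < u x ∧ u x < 1)
    (hsqrt : ∀ x : ℝ, 0 < x →
      Real.sqrt (-Real.log (1 - u x ^ 2)) = -(deriv u x))
    (hg_pos : ∀ x : ℝ, x ≠ 0 → 0 < -Real.log (1 - u x ^ 2))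

include hcont h0 in
lemma hδ_ex : ∃ δ : ℝ, 0 < δ ∧ δ ≤ Real.exp (-1) ∧
    ∀ y : ℝ, |y| ≤ δ → 1/2 ≤ u y := by
  have hT : Tendsto u (nhds 0) (nhds 1) := by
    have := hcont.continuousAt (x := (0:ℝ))
    rwa [ContinuousAt, h0] at this
  have hev : ∀ᶠ y in nhds (0:ℝ), 1/2 < u y :=
    hT.eventually (eventually_gt_nhds (by norm_num))
  rw [Metric.eventually_nhds_iff] at hev
  obtain ⟨ε, hε, hball⟩ := hev
  refine ⟨min (ε/2) (Real.exp (-1)), ?_, min_le_right _ _, ?_⟩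
  · exact lt_min (by linarith) (Real.exp_pos _)
  · intro y hy
    have h1 : |y| < ε := by
      have := min_le_left (ε/2) (Real.exp (-1))
      calc |y| ≤ min (ε/2) (Real.exp (-1)) := hy
        _ ≤ ε/2 := min_le_left _ _
        _ < ε := by linarith
    have := hball (y := y) (by simpa [Real.dist_eq] using h1)
    linarith

include hrange hg_pos in
lemma hg_near0 :
    ∀ δ : ℝ, 0 < δ → δ ≤ Real.exp (-1) →
    (∀ x ∈ Ioc (0:ℝ) δ,
      x * Real.sqrt (-Real.log (1 - u x ^ 2)) ≤ 1 - u x ^ 2) →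
    ∀ x ∈ Ioc (0:ℝ) δ, -Real.log (1 - u x ^ 2) ≤ -2 * Real.log x := by
  intro δ hδ hδe hMVT x hx
  obtain ⟨hx0, hxδ⟩ := hx
  by_contra hgt
  push_neg at hgt
  have hxe : x ≤ Real.exp (-1) := hxδ.trans hδe
  have hlogx : Real.log x ≤ -1 := by
    have := Real.log_le_log hx0 hxe
    rwa [Real.log_exp] at this
  have hg2 : (1:ℝ) ≤ -Real.log (1 - u x ^ 2) := by linarith
  have hs1 : (1:ℝ) ≤ Real.sqrt (-Real.log (1 - u x ^ 2)) := by
    have := Real.sqrt_le_sqrt hg2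
    rwa [Real.sqrt_one] at this
  have hvpos : (0:ℝ) < 1 - u x ^ 2 := by
    have h := hrange x hx0.ne'; nlinarith [h.1, h.2]
  have hveq : (1:ℝ) - u x ^ 2 = Real.exp (Real.log (1 - u x ^ 2)) :=
    (Real.exp_log hvpos).symm
  have hlt : Real.exp (Real.log (1 - u x ^ 2)) < Real.exp (2 * Real.log x) := by
    apply Real.exp_lt_exp.2
    linarith
  have hx2 : Real.exp (2 * Real.log x) = x ^ 2 := by
    rw [two_mul, Real.exp_add, Real.exp_log hx0]
    ring
  have hchain : x ≤ 1 - u x ^ 2 := by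
    calc x = x * 1 := (mul_one x).symm
      _ ≤ x * Real.sqrt (-Real.log (1 - u x ^ 2)) :=
        mul_le_mul_of_nonneg_left hs1 hx0.le
      _ ≤ 1 - u x ^ 2 := hMVT x ⟨hx0, hxδ⟩
  have hfin : x < x ^ 2 := by
    calc x ≤ 1 - u x ^ 2 := hchain
      _ = Real.exp (Real.log (1 - u x ^ 2)) := hveq
      _ < Real.exp (2 * Real.log x) := hlt
      _ = x ^ 2 := hx2
  have hxlt1 : x < 1 := by
    have h1 : Real.exp (-1) < 1 := by
      rw [Real.exp_lt_one_iff]; norm_num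
    linarith
  nlinarith

include hrange hsqrt hg_pos in
lemma hf_near0 :
    ∀ δ : ℝ, 0 < δ →
    (∀ x ∈ Ioc (0:ℝ) δ,
      x * Real.sqrt (-Real.log (1 - u x ^ 2)) ≤ 1 - u x ^ 2) →
    ∀ x ∈ Ioc (0:ℝ) δ, |x * u x * deriv u x / (1 - u x ^ 2)| ≤ 1 := by
  intro δ hδ hMVT x hx
  obtain ⟨hx0, hxδ⟩ := hx
  have h := hrange x hx0.ne'
  have hvpos : (0:ℝ) < 1 - u x ^ 2 := by nlinarith [h.1, h.2]
  have hs := hsqrt x hx0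
  have hgp := hg_pos x hx0.ne'
  have hspos : 0 < Real.sqrt (-Real.log (1 - u x ^ 2)) := Real.sqrt_pos.2 hgp
  have hu'neg : deriv u x < 0 := by
    rw [hs] at hspos
    linarith
  rw [abs_div, abs_of_pos hvpos, div_le_one hvpos]
  have habs : |x * u x * deriv u x| = x * u x * (-(deriv u x)) := by
    rw [abs_of_neg (by
      have h1 : 0 < x * u x := mul_pos hx0 h.1
      exact mul_neg_of_pos_of_neg h1 hu'neg : x * u x * deriv u x < 0)]
    ring
  rw [habs, ← hs]
  calc x * u x * Real.sqrt (-Real.log (1 - u x ^ 2))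
      ≤ x * 1 * Real.sqrt (-Real.log (1 - u x ^ 2)) := by
        apply mul_le_mul_of_nonneg_right _ hspos.le
        nlinarith [h.2]
    _ = x * Real.sqrt (-Real.log (1 - u x ^ 2)) := by ring
    _ ≤ 1 - u x ^ 2 := hMVT x ⟨hx0, hxδ⟩
end Test


section Test
variable
    (u : ℝ → ℝ)
    (hcont : Continuous u)
    (hrange : ∀ x : ℝ, x ≠ 0 → 0 < u x ∧ u x < 1)
    (hinv : ∀ x : ℝ, x ≠ 0 → (deriv u x) ^ 2 = -Real.log (1 - u x ^ 2))
    (hu'_neg : ∀ x : ℝ, 0 < x → deriv u x < 0)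

include hrange hinv hu'_neg in
lemma hu'_tail : ∀ x : ℝ, 0 < x → u x ≤ 1/2 → -(deriv u x) ≤ 2 * u x := by
  intro x hx hhalf
  have h := hrange x hx.ne'
  have hv : (3:ℝ)/4 ≤ 1 - u x ^ 2 := by nlinarith [h.1]
  have hvpos : (0:ℝ) < 1 - u x ^ 2 := by linarith
  have hlog : Real.log (1 - u x ^ 2)⁻¹ ≤ (1 - u x ^ 2)⁻¹ - 1 :=
    Real.log_le_sub_one_of_pos (by positivity)
  rw [Real.log_inv] at hlog
  have hinvle : (1 - u x ^ 2)⁻¹ ≤ 4/3 := by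
    rw [inv_le_comm₀ hvpos (by norm_num)]
    linarith
  have h1 : (deriv u x) ^ 2 ≤ u x ^ 2 * (4/3) := by
    rw [hinv x hx.ne']
    have h2 : (1 - u x ^ 2)⁻¹ - 1 = u x ^ 2 * (1 - u x ^ 2)⁻¹ := by field_simp; ring
    rw [h2] at hlog
    have h3 : u x ^ 2 * (1 - u x ^ 2)⁻¹ ≤ u x ^ 2 * (4/3) :=
      mul_le_mul_of_nonneg_left hinvle (by positivity)
    linarith
  nlinarith [hu'_neg x hx, h.1]

lemma hf_meas (hcont : Continuous u) :
    Measurable (fun x : ℝ => x * u x * deriv u x / (1 - u x ^ 2)) := by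
  exact ((measurable_id.mul hcont.measurable).mul (measurable_deriv u)).div
    (measurable_const.sub (hcont.measurable.pow_const 2))

lemma hg_meas (hcont : Continuous u) :
    Measurable (fun x : ℝ => -Real.log (1 - u x ^ 2)) :=
  ((Real.measurable_log.comp
    (measurable_const.sub (hcont.measurable.pow_const 2))).neg)
end Test


lemma integrable_of_three (F : ℝ → ℝ) (hFm : Measurable F) (δ A : ℝ)
    (hδ : 0 < δ) (hδA : δ ≤ A)
    (hFc : ContinuousOn F (Icc δ A))
    (B1 : ℝ → ℝ) (hB1 : IntegrableOn B1 (Ioc 0 δ))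
    (hb1 : ∀ x ∈ Ioc (0:ℝ) δ, ‖F x‖ ≤ B1 x)
    (B2 : ℝ → ℝ) (hB2 : IntegrableOn B2 (Ioi A))
    (hb2 : ∀ x ∈ Ioi A, ‖F x‖ ≤ B2 x) :
    IntegrableOn F (Ioi (0:ℝ)) := by
  have h1 : IntegrableOn F (Ioc 0 δ) :=
    Integrable.mono' hB1 hFm.aestronglyMeasurable.restrict
      ((ae_restrict_iff' measurableSet_Ioc).2 (ae_of_all _ hb1))
  have h2 : IntegrableOn F (Ioc δ A) :=
    (hFc.integrableOn_Icc).mono_set Ioc_subset_Icc_self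
  have h3 : IntegrableOn F (Ioi A) :=
    Integrable.mono' hB2 hFm.aestronglyMeasurable.restrict
      ((ae_restrict_iff' measurableSet_Ioi).2 (ae_of_all _ hb2))
  have h4 := (h1.union h2).union h3
  rwa [Ioc_union_Ioc_eq_Ioc hδ.le hδA, Ioc_union_Ioi_eq_Ioi (hδ.le.trans hδA)] at h4

lemma rpow_bound : ∀ x : ℝ, 0 < x → -2 * Real.log x ≤ 4 * x ^ (-(1/2) : ℝ) := by
  intro x hx
  have h1 : Real.log (x ^ (-(1/2):ℝ)) = -(1/2) * Real.log x := Real.log_rpow hx _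
  have h2 : Real.log (x ^ (-(1/2):ℝ)) ≤ x ^ (-(1/2):ℝ) - 1 :=
    Real.log_le_sub_one_of_pos (Real.rpow_pos_of_pos hx _)
  have h3 : (0:ℝ) < x ^ (-(1/2):ℝ) := Real.rpow_pos_of_pos hx _
  nlinarith

lemma rpow_integrable (δ : ℝ) (hδ : 0 < δ) :
    IntegrableOn (fun x : ℝ => 4 * x ^ (-(1/2) : ℝ)) (Ioc 0 δ) := by
  have h := intervalIntegral.intervalIntegrable_rpow'
    (a := 0) (b := δ) (by norm_num : (-1:ℝ) < -(1/2))
  rw [intervalIntegrable_iff_integrableOn_Ioc_of_le hδ.le] at h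
  exact h.const_mul 4

lemma exp_tail_integrable (A c : ℝ) :
    IntegrableOn (fun x : ℝ => c * Real.exp (-x)) (Ioi A) := by
  have h := exp_neg_integrableOn_Ioi A (b := 1) one_pos
  simp only [neg_mul, one_mul] at h
  exact h.const_mul c

lemma exp2_tail_integrable (A c : ℝ) :
    IntegrableOn (fun x : ℝ => c * Real.exp (-(2*x))) (Ioi A) := by
  have h := exp_neg_integrableOn_Ioi A (b := 2) two_pos
  simp only [neg_mul] at h
  exact h.const_mul c


section Test
variable
    (u : ℝ → ℝ)
    (hcont : Continuous u)
    (hrange : ∀ x : ℝ, x ≠ 0 → 0 < u x ∧ u x < 1)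
    (hu'_cont : ContinuousOn (deriv u) {(0:ℝ)}ᶜ)
    (hg_hasDeriv : ∀ x : ℝ, x ≠ 0 →
      HasDerivAt (fun y => -Real.log (1 - u y ^ 2))
        (2 * u x * deriv u x / (1 - u x ^ 2)) x)

include hcont hrange hu'_cont in
lemma hf_cont : ContinuousOn
    (fun x : ℝ => x * u x * deriv u x / (1 - u x ^ 2)) {(0:ℝ)}ᶜ := by
  apply ContinuousOn.div
  · exact (continuous_id.continuousOn.mul hcont.continuousOn).mul hu'_cont
  · exact continuousOn_const.sub (hcont.continuousOn.pow 2)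
  · intro x hx
    have h := hrange x hx
    nlinarith [h.1, h.2]

include hrange hg_hasDeriv in
lemma hΦ_deriv : ∀ x : ℝ, x ≠ 0 →
    HasDerivAt (fun y => y * -Real.log (1 - u y ^ 2) / 2)
      (-Real.log (1 - u x ^ 2) / 2 + x * u x * deriv u x / (1 - u x ^ 2)) x := by
  intro x hx
  have h1 := (hasDerivAt_id x).mul (hg_hasDeriv x hx)
  have h2 : HasDerivAt (fun y => y * -Real.log (1 - u y ^ 2) / 2) _ x := h1.div_const 2
  convert h2 using 1
  have hv : (1:ℝ) - u x ^ 2 ≠ 0 := by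
    have h := hrange x hx
    nlinarith [h.1, h.2]
  simp only [id]
  ring

include hcont hrange hu'_cont hg_hasDeriv in
lemma hFTC : ∀ a b : ℝ, 0 < a → a ≤ b →
    (∫ x in a..b, x * u x * deriv u x / (1 - u x ^ 2)) =
      (b * -Real.log (1 - u b ^ 2) / 2 - a * -Real.log (1 - u a ^ 2) / 2)
      - (1/2) * ∫ x in a..b, -Real.log (1 - u x ^ 2) := by
  intro a b ha hab
  have hsub : uIcc a b ⊆ {(0:ℝ)}ᶜ := by
    intro z hz
    rw [uIcc_of_le hab] at hz
    simp only [mem_compl_iff, mem_singleton_iff]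
    have := hz.1
    intro h; rw [h] at this; linarith
  have hIf : IntervalIntegrable
      (fun x => x * u x * deriv u x / (1 - u x ^ 2)) volume a b :=
    ((hf_cont u hcont hrange hu'_cont).mono hsub).intervalIntegrable
  have hIg : IntervalIntegrable
      (fun x => -Real.log (1 - u x ^ 2)) volume a b := by
    refine (ContinuousOn.mono ?_ hsub).intervalIntegrable
    refine ContinuousOn.neg (ContinuousOn.log
      (continuousOn_const.sub (hcont.continuousOn.pow 2)) ?_)
    intro x hx
    have h := hrange x hx
    nlinarith [h.1, h.2]
  have hI : IntervalIntegrable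
      (fun x => -Real.log (1 - u x ^ 2) / 2 +
        x * u x * deriv u x / (1 - u x ^ 2)) volume a b :=
    (hIg.div_const 2).add hIf
  have hderiv : ∀ x ∈ uIcc a b,
      HasDerivAt (fun y => y * -Real.log (1 - u y ^ 2) / 2)
        (-Real.log (1 - u x ^ 2) / 2 + x * u x * deriv u x / (1 - u x ^ 2)) x :=
    fun x hx => hΦ_deriv u hrange hg_hasDeriv x (hsub hx)
  have hmain := intervalIntegral.integral_eq_sub_of_hasDerivAt hderiv hI
  rw [intervalIntegral.integral_add (hIg.div_const 2) hIf] at hmain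
  have hgdiv : (∫ x in a..b, -Real.log (1 - u x ^ 2) / 2) =
      (∫ x in a..b, -Real.log (1 - u x ^ 2)) / 2 :=
    intervalIntegral.integral_div 2 _
  rw [hgdiv] at hmain
  linarith
end Test


lemma key_Ioi (f g : ℝ → ℝ) (δ A C : ℝ) (hδ : 0 < δ) (hδ1 : δ ≤ 1) (hA1 : 1 ≤ A)
    (hfi : IntegrableOn f (Ioi (0:ℝ))) (hgi : IntegrableOn g (Ioi (0:ℝ)))
    (hgpos : ∀ x : ℝ, 0 < x → 0 ≤ g x)
    (hgnear : ∀ x ∈ Ioc (0:ℝ) δ, g x ≤ -2 * Real.log x)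
    (hgtail : ∀ x : ℝ, A ≤ x → g x ≤ C * Real.exp (-(2*x)))
    (hC : 0 ≤ C)
    (hFTC : ∀ a b : ℝ, 0 < a → a ≤ b →
      (∫ x in a..b, f x) = (b * g b / 2 - a * g a / 2) - (1/2) * ∫ x in a..b, g x) :
    ∫ x in Ioi (0:ℝ), f x = -(1/2) * ∫ x in Ioi (0:ℝ), g x := by
  set Φ : ℝ → ℝ := fun x => x * g x / 2 with hΦdef
  -- tail limit of Φ
  have hΦ_inf : Tendsto Φ atTop (𝓝 0) := by
    have hub : Tendsto (fun b : ℝ => C/2 * Real.exp (-b)) atTop (𝓝 0) := by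
      have := Real.tendsto_exp_neg_atTop_nhds_zero.const_mul (C/2)
      simpa using this
    apply tendsto_of_tendsto_of_tendsto_of_le_of_le' tendsto_const_nhds hub
    · filter_upwards [eventually_ge_atTop (1:ℝ)] with b hb
      have hb0 : (0:ℝ) < b := lt_of_lt_of_le one_pos hb
      have := hgpos b hb0
      simp only [hΦdef]
      positivity
    · filter_upwards [eventually_ge_atTop A] with b hb
      have hb1 : (1:ℝ) ≤ b := hA1.trans hb
      have hb0 : (0:ℝ) < b := lt_of_lt_of_le one_pos hb1
      have h1 := hgtail b hb
      have h2 : b * g b ≤ b * (C * Real.exp (-(2*b))) :=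
        mul_le_mul_of_nonneg_left h1 hb0.le
      have h3 : b * Real.exp (-b) ≤ 1 := by
        have h4 : b ≤ Real.exp b := by
          have := Real.add_one_le_exp b; linarith
        have h5 : Real.exp (-b) = (Real.exp b)⁻¹ := Real.exp_neg b
        rw [h5]
        rw [mul_inv_le_iff₀ (Real.exp_pos b)]
        linarith
      have h6 : Real.exp (-(2*b)) = Real.exp (-b) * Real.exp (-b) := by
        rw [← Real.exp_add]; ring_nf
      simp only [hΦdef]
      calc b * g b / 2 ≤ b * (C * (Real.exp (-b) * Real.exp (-b))) / 2 := by
            rw [← h6]; linarith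
        _ = C/2 * Real.exp (-b) * (b * Real.exp (-b)) := by ring
        _ ≤ C/2 * Real.exp (-b) * 1 := by
            apply mul_le_mul_of_nonneg_left h3
            positivity
        _ = C/2 * Real.exp (-b) := by ring
  -- tail identity
  have hfi1 : IntegrableOn f (Ioi (1:ℝ)) := hfi.mono_set (Ioi_subset_Ioi zero_le_one)
  have hgi1 : IntegrableOn g (Ioi (1:ℝ)) := hgi.mono_set (Ioi_subset_Ioi zero_le_one)
  have T1 := intervalIntegral_tendsto_integral_Ioi 1 hfi1 (tendsto_id (x := atTop))
  have T2 := intervalIntegral_tendsto_integral_Ioi 1 hgi1 (tendsto_id (x := atTop))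
  have T3 : Tendsto (fun b => Φ b - Φ 1 - (1/2) * ∫ x in (1:ℝ)..b, g x) atTop
      (𝓝 (0 - Φ 1 - (1/2) * ∫ x in Ioi (1:ℝ), g x)) :=
    ((hΦ_inf.sub_const (Φ 1)).sub (T2.const_mul (1/2)))
  have T4 : Tendsto (fun b => ∫ x in (1:ℝ)..b, f x) atTop
      (𝓝 (0 - Φ 1 - (1/2) * ∫ x in Ioi (1:ℝ), g x)) := by
    apply T3.congr'
    filter_upwards [eventually_ge_atTop (1:ℝ)] with b hb
    rw [hFTC 1 b one_pos hb]
  have htail : ∫ x in Ioi (1:ℝ), f x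
      = 0 - Φ 1 - (1/2) * ∫ x in Ioi (1:ℝ), g x := tendsto_nhds_unique T1 T4
  -- near-zero identity
  set s : ℕ → Set ℝ := fun n => Ioc ((n+1:ℝ)⁻¹) 1 with hsdef
  have hsm : ∀ n, MeasurableSet (s n) := fun n => measurableSet_Ioc
  have hsmono : Monotone s := by
    intro n m hnm
    apply Ioc_subset_Ioc_left
    apply inv_anti₀ (by positivity)
    have : (n:ℝ) ≤ m := Nat.cast_le.2 hnm
    linarith
  have hsunion : (⋃ n, s n) = Ioc (0:ℝ) 1 := by
    ext x
    simp only [hsdef, mem_iUnion, mem_Ioc]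
    constructor
    · rintro ⟨n, h1, h2⟩
      exact ⟨lt_trans (by positivity) h1, h2⟩
    · rintro ⟨h1, h2⟩
      obtain ⟨n, hn⟩ := exists_nat_one_div_lt h1
      exact ⟨n, by rwa [one_div] at hn, h2⟩
  have hfiIoc : IntegrableOn f (Ioc (0:ℝ) 1) := hfi.mono_set Ioc_subset_Ioi_self
  have hgiIoc : IntegrableOn g (Ioc (0:ℝ) 1) := hgi.mono_set Ioc_subset_Ioi_self
  have U1 : Tendsto (fun n => ∫ x in s n, f x) atTop (𝓝 (∫ x in Ioc (0:ℝ) 1, f x)) := by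
    have := tendsto_setIntegral_of_monotone hsm hsmono (hsunion ▸ hfiIoc)
    rwa [hsunion] at this
  have U2 : Tendsto (fun n => ∫ x in s n, g x) atTop (𝓝 (∫ x in Ioc (0:ℝ) 1, g x)) := by
    have := tendsto_setIntegral_of_monotone hsm hsmono (hsunion ▸ hgiIoc)
    rwa [hsunion] at this
  have han_pos : ∀ n : ℕ, (0:ℝ) < (n+1:ℝ)⁻¹ := fun n => by positivity
  have han_le1 : ∀ n : ℕ, ((n+1:ℝ))⁻¹ ≤ 1 := by
    intro n
    rw [inv_le_one_iff₀]
    right; simp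
  have hseq : ∀ n : ℕ, ∫ x in s n, f x
      = (1 * g 1 / 2 - ((n+1:ℝ)⁻¹) * g ((n+1:ℝ)⁻¹) / 2)
        - (1/2) * ∫ x in s n, g x := by
    intro n
    have h1 := hFTC ((n+1:ℝ)⁻¹) 1 (han_pos n) (han_le1 n)
    rw [intervalIntegral.integral_of_le (han_le1 n),
        intervalIntegral.integral_of_le (han_le1 n)] at h1
    exact h1
  have han_tend : Tendsto (fun n : ℕ => ((n+1:ℝ))⁻¹) atTop (𝓝 0) := by
    have := tendsto_one_div_add_atTop_nhds_zero_nat (𝕜 := ℝ)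
    simpa [one_div] using this
  have hΦ_zero : Tendsto (fun n : ℕ => Φ (((n+1:ℝ))⁻¹)) atTop (𝓝 0) := by
    have hL : Tendsto (fun x : ℝ => -(Real.log x * x)) (nhdsWithin 0 (Ioi 0)) (𝓝 0) := by
      have := (tendsto_log_mul_rpow_nhdsGT_zero one_pos).neg
      simp only [Real.rpow_one, neg_zero] at this
      exact this
    have han_tend' : Tendsto (fun n : ℕ => ((n+1:ℝ))⁻¹) atTop (nhdsWithin 0 (Ioi 0)) := by
      apply tendsto_nhdsWithin_of_tendsto_nhds_of_eventually_within _ han_tend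
      exact Eventually.of_forall (fun n => han_pos n)
    have hub := hL.comp han_tend'
    apply tendsto_of_tendsto_of_tendsto_of_le_of_le' tendsto_const_nhds hub
    · exact Eventually.of_forall (fun n => by
        have := hgpos _ (han_pos n)
        simp only [hΦdef]
        positivity)
    · filter_upwards [han_tend.eventually (gt_mem_nhds hδ)] with n hn
      have h1 := hgnear ((n+1:ℝ)⁻¹) ⟨han_pos n, hn.le⟩
      have h2 : ((n+1:ℝ))⁻¹ * g (((n+1:ℝ))⁻¹) ≤
          ((n+1:ℝ))⁻¹ * (-2 * Real.log (((n+1:ℝ))⁻¹)) :=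
        mul_le_mul_of_nonneg_left h1 (han_pos n).le
      simp only [hΦdef, Function.comp]
      nlinarith [h2]
  have U3 : Tendsto (fun n : ℕ => (1 * g 1 / 2 - ((n+1:ℝ)⁻¹) * g ((n+1:ℝ)⁻¹) / 2)
      - (1/2) * ∫ x in s n, g x) atTop
      (𝓝 ((1 * g 1 / 2 - 0) - (1/2) * ∫ x in Ioc (0:ℝ) 1, g x)) := by
    apply Tendsto.sub _ (U2.const_mul (1/2))
    apply Tendsto.const_sub
    have : (fun n : ℕ => ((n+1:ℝ)⁻¹) * g ((n+1:ℝ)⁻¹) / 2)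
        = fun n : ℕ => Φ (((n+1:ℝ))⁻¹) := rfl
    rw [this]
    exact hΦ_zero
  have U4 : Tendsto (fun n => ∫ x in s n, f x) atTop
      (𝓝 ((1 * g 1 / 2 - 0) - (1/2) * ∫ x in Ioc (0:ℝ) 1, g x)) := by
    apply U3.congr'
    exact Eventually.of_forall (fun n => (hseq n).symm)
  have hnear : ∫ x in Ioc (0:ℝ) 1, f x
      = (1 * g 1 / 2 - 0) - (1/2) * ∫ x in Ioc (0:ℝ) 1, g x :=
    tendsto_nhds_unique U1 U4
  -- combine
  have hdisj : Disjoint (Ioc (0:ℝ) 1) (Ioi (1:ℝ)) := Ioc_disjoint_Ioi le_rfl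
  have hun : Ioc (0:ℝ) 1 ∪ Ioi (1:ℝ) = Ioi (0:ℝ) := Ioc_union_Ioi_eq_Ioi zero_le_one
  have hsplitf : ∫ x in Ioi (0:ℝ), f x
      = (∫ x in Ioc (0:ℝ) 1, f x) + ∫ x in Ioi (1:ℝ), f x := by
    rw [← setIntegral_union hdisj measurableSet_Ioi hfiIoc hfi1, hun]
  have hsplitg : ∫ x in Ioi (0:ℝ), g x
      = (∫ x in Ioc (0:ℝ) 1, g x) + ∫ x in Ioi (1:ℝ), g x := by
    rw [← setIntegral_union hdisj measurableSet_Ioi hgiIoc hgi1, hun]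
  rw [hsplitf, hsplitg, hnear, htail]
  simp only [hΦdef]
  ring


section Test
variable
    (u : ℝ → ℝ)
    (hrange : ∀ x : ℝ, x ≠ 0 → 0 < u x ∧ u x < 1)
    (hu'_neg : ∀ x : ℝ, 0 < x → deriv u x < 0)
    (hu'_tail : ∀ x : ℝ, 0 < x → u x ≤ 1/2 → -(deriv u x) ≤ 2 * u x)
    (hu_decay : ∀ x : ℝ, 1 ≤ x → u x ≤ (u 1 * Real.exp 1) * Real.exp (-x))

include hrange hu'_neg hu'_tail hu_decay in
lemma hf_tail : ∀ A : ℝ, 1 ≤ A → (∀ x : ℝ, A ≤ x → u x ≤ 1/2) →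
    ∀ x : ℝ, A ≤ x →
    |x * u x * deriv u x / (1 - u x ^ 2)| ≤
      8/3 * (u 1 * Real.exp 1)^2 * Real.exp (-x) := by
  intro A hA1 hAhalf x hx
  have hx1 : (1:ℝ) ≤ x := hA1.trans hx
  have hx0 : (0:ℝ) < x := lt_of_lt_of_le one_pos hx1
  have h := hrange x hx0.ne'
  have hhalf := hAhalf x hx
  have hv : (3:ℝ)/4 ≤ 1 - u x ^ 2 := by nlinarith [h.1]
  have hvpos : (0:ℝ) < 1 - u x ^ 2 := by linarith
  have hu' := hu'_neg x hx0
  have ht := hu'_tail x hx0 hhalf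
  have hd := hu_decay x hx1
  have habs : |x * u x * deriv u x / (1 - u x ^ 2)|
      = x * u x * (-(deriv u x)) / (1 - u x ^ 2) := by
    rw [abs_div, abs_of_pos hvpos, abs_of_neg
      (mul_neg_of_pos_of_neg (mul_pos hx0 h.1) hu')]
    ring
  rw [habs]
  have hnum : x * u x * (-(deriv u x)) ≤ x * u x * (2 * u x) :=
    mul_le_mul_of_nonneg_left ht (mul_pos hx0 h.1).le
  have hstep1 : x * u x * (-(deriv u x)) / (1 - u x ^ 2)
      ≤ x * u x * (2 * u x) / (3/4) := by
    apply div_le_div₀ (by nlinarith [h.1]) hnum (by norm_num) hv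
  have he : Real.exp (-(2*x)) = Real.exp (-x) * Real.exp (-x) := by
    rw [← Real.exp_add]; ring_nf
  have hsq : u x ^ 2 ≤ (u 1 * Real.exp 1)^2 * (Real.exp (-x) * Real.exp (-x)) := by
    nlinarith [h.1, Real.exp_pos (-x)]
  have hxe : x * Real.exp (-x) ≤ 1 := by
    have h4 : x ≤ Real.exp x := by have := Real.add_one_le_exp x; linarith
    rw [Real.exp_neg x, mul_inv_le_iff₀ (Real.exp_pos x)]
    linarith
  refine hstep1.trans ?_
  calc x * u x * (2 * u x) / (3/4)
      = 8/3 * (x * u x ^ 2) := by ring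
    _ ≤ 8/3 * (x * ((u 1 * Real.exp 1)^2 * (Real.exp (-x) * Real.exp (-x)))) := by
        apply mul_le_mul_of_nonneg_left _ (by norm_num)
        exact mul_le_mul_of_nonneg_left hsq hx0.le
    _ = 8/3 * (u 1 * Real.exp 1)^2 * Real.exp (-x) * (x * Real.exp (-x)) := by ring
    _ ≤ 8/3 * (u 1 * Real.exp 1)^2 * Real.exp (-x) * 1 := by
        apply mul_le_mul_of_nonneg_left hxe (by positivity)
    _ = 8/3 * (u 1 * Real.exp 1)^2 * Real.exp (-x) := by ring
end Test


/-- the nondegeneracy (Fredholm obstruction) condition for the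
cusped soliton: x·u·u'/(1 − u²) and log(1 − u²) are integrable on ℝ and
∫_ℝ x·u·u'/(1 − u²) dx = (1/2)∫_ℝ log(1 − u²) dx < 0. -/
theorem cusped_fredholm_obstruction
    (u : ℝ → ℝ)
    (hcont : Continuous u)
    (heven : ∀ x : ℝ, u (-x) = u x)
    (h0 : u 0 = 1)
    (hrange : ∀ x : ℝ, x ≠ 0 → 0 < u x ∧ u x < 1)
    (hdecay : Tendsto u (cocompact ℝ) (nhds 0))
    (hsmooth : ContDiffOn ℝ 2 u {(0 : ℝ)}ᶜ)
    (heq : ∀ x : ℝ, x ≠ 0 → (1 - u x ^ 2) * deriv (deriv u) x = u x)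
    (hinv : ∀ x : ℝ, x ≠ 0 → (deriv u x) ^ 2 = -Real.log (1 - u x ^ 2)) :
    Integrable (fun x : ℝ => x * u x * deriv u x / (1 - u x ^ 2)) ∧
    Integrable (fun x : ℝ => Real.log (1 - u x ^ 2)) ∧
    (∫ x : ℝ, x * u x * deriv u x / (1 - u x ^ 2)) =
      (1 / 2) * ∫ x : ℝ, Real.log (1 - u x ^ 2) ∧
    (∫ x : ℝ, x * u x * deriv u x / (1 - u x ^ 2)) < 0 := by
  have Hgpos := hg_pos u hrange
  have Hud := hu_diff u hsmooth
  have Hu'c := hu'_cont u hsmooth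
  have Hgd := hg_hasDeriv u hrange hsmooth
  have Hodd := hodd u heven
  have Hu'ne := hu'_ne u hrange hinv
  have Hu'neg := hu'_neg u hcont hrange hdecay Hu'c Hu'ne
  have Hsqrt := hsqrt u hinv Hu'neg
  have Hganti := hganti u hcont hrange Hu'neg Hgd
  have Hu'le := hu'_le u hrange hinv Hu'neg
  have Hudecay := hu_decay u hcont Hud Hu'le
  have Hu'tail := hu'_tail u hrange hinv Hu'neg
  obtain ⟨A, hA1, hAhalf⟩ := hA_ex u hdecay
  obtain ⟨δ, hδ0, hδe, hδhalf⟩ := hδ_ex u hcont h0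
  have HMVT := hMVT u hcont h0 hrange Hud Hu'neg Hsqrt Hganti δ hδ0 hδhalf
  have Hgnear := hg_near0 u hrange Hgpos δ hδ0 hδe HMVT
  have Hfnear := hf_near0 u hrange Hsqrt Hgpos δ hδ0 HMVT
  have Hgtail := hg_tail u hrange Hudecay A hA1 hAhalf
  have Hftail := hf_tail u hrange Hu'neg Hu'tail Hudecay A hA1 hAhalf
  have hδ1 : δ ≤ 1 := by
    have h1 : Real.exp (-1) < 1 := by rw [Real.exp_lt_one_iff]; norm_num
    linarith
  have hδA : δ ≤ A := hδ1.trans hA1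
  have hC : (0:ℝ) ≤ 4/3 * (u 1 * Real.exp 1)^2 := by positivity
  have Hgm := hg_meas u hcont
  have Hfm := hf_meas u hcont
  have hIccsub : Icc δ A ⊆ {(0:ℝ)}ᶜ := by
    intro z hz
    simp only [mem_compl_iff, mem_singleton_iff]
    have := hz.1
    intro hzz; rw [hzz] at this; linarith
  have hgi : IntegrableOn (fun x : ℝ => -Real.log (1 - u x ^ 2)) (Ioi (0:ℝ)) := by
    apply integrable_of_three _ Hgm δ A hδ0 hδA
      ((hg_cont u hcont hrange).mono hIccsub)
      (fun x => 4 * x ^ (-(1/2):ℝ)) (rpow_integrable δ hδ0) ?_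
      (fun x => 4/3 * (u 1 * Real.exp 1)^2 * Real.exp (-(2*x)))
      (exp2_tail_integrable A _) ?_
    · intro x hx
      rw [Real.norm_eq_abs, abs_of_nonneg (Hgpos x hx.1.ne').le]
      exact (Hgnear x hx).trans (rpow_bound x hx.1)
    · intro x hx
      have hx0 : (0:ℝ) < x := lt_of_lt_of_le one_pos (hA1.trans (le_of_lt hx))
      rw [Real.norm_eq_abs, abs_of_nonneg (Hgpos x hx0.ne').le]
      exact Hgtail x (le_of_lt hx)
  have hfi : IntegrableOn
      (fun x : ℝ => x * u x * deriv u x / (1 - u x ^ 2)) (Ioi (0:ℝ)) := by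
    apply integrable_of_three _ Hfm δ A hδ0 hδA
      ((hf_cont u hcont hrange Hu'c).mono hIccsub)
      (fun _ => (1:ℝ)) ?_ ?_
      (fun x => 8/3 * (u 1 * Real.exp 1)^2 * Real.exp (-x))
      (exp_tail_integrable A _) ?_
    · rw [integrableOn_const_iff]
      exact Or.inr measure_Ioc_lt_top
    · intro x hx
      rw [Real.norm_eq_abs]
      exact Hfnear x hx
    · intro x hx
      rw [Real.norm_eq_abs]
      exact Hftail x (le_of_lt hx)
  have HFTC := hFTC u hcont hrange Hu'c Hgd
  have hkey := key_Ioi (fun x => x * u x * deriv u x / (1 - u x ^ 2))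
      (fun x => -Real.log (1 - u x ^ 2)) δ A (4/3 * (u 1 * Real.exp 1)^2)
      hδ0 hδ1 hA1 hfi hgi
      (fun x hx => (Hgpos x hx.ne').le) Hgnear (fun x hx => Hgtail x hx) hC
      (fun a b ha hab => HFTC a b ha hab)
  have hfe : ∀ x : ℝ, (-x) * u (-x) * deriv u (-x) / (1 - u (-x) ^ 2)
      = x * u x * deriv u x / (1 - u x ^ 2) := by
    intro x
    rw [heven x, Hodd x]
    ring
  have hge : ∀ x : ℝ, -Real.log (1 - u (-x) ^ 2) = -Real.log (1 - u x ^ 2) := by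
    intro x; rw [heven x]
  have hfint : Integrable (fun x : ℝ => x * u x * deriv u x / (1 - u x ^ 2)) :=
    even_integrable' hfe hfi
  have hgint : Integrable (fun x : ℝ => -Real.log (1 - u x ^ 2)) :=
    even_integrable' hge hgi
  have hlint : Integrable (fun x : ℝ => Real.log (1 - u x ^ 2)) := by
    have h2 : (fun x : ℝ => Real.log (1 - u x ^ 2))
        = (fun x : ℝ => -(-Real.log (1 - u x ^ 2))) := by funext x; ring
    rw [h2]
    exact hgint.neg
  have hIf : (∫ x : ℝ, x * u x * deriv u x / (1 - u x ^ 2))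
      = 2 * ∫ x in Ioi (0:ℝ), x * u x * deriv u x / (1 - u x ^ 2) :=
    even_integral' hfe
  have hIl : (∫ x : ℝ, Real.log (1 - u x ^ 2))
      = 2 * ∫ x in Ioi (0:ℝ), Real.log (1 - u x ^ 2) :=
    even_integral' (fun x => by rw [heven x])
  have hIlneg : (∫ x in Ioi (0:ℝ), Real.log (1 - u x ^ 2))
      = -∫ x in Ioi (0:ℝ), -Real.log (1 - u x ^ 2) := by
    rw [← integral_neg]
    simp
  have hgIpos : 0 < ∫ x in Ioi (0:ℝ), -Real.log (1 - u x ^ 2) := by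
    rw [setIntegral_pos_iff_support_of_nonneg_ae
      ((ae_restrict_iff' measurableSet_Ioi).2
        (ae_of_all _ (fun x hx => (Hgpos x (ne_of_gt hx)).le))) hgi]
    have hsub : Ioi (0:ℝ) ⊆
        Function.support (fun x : ℝ => -Real.log (1 - u x ^ 2)) ∩ Ioi 0 := by
      intro x hx
      exact ⟨ne_of_gt (Hgpos x (ne_of_gt hx)), hx⟩
    calc (0:ENNReal) < volume (Ioi (0:ℝ)) := by simp [Real.volume_Ioi]
      _ ≤ _ := measure_mono hsub
  refine ⟨hfint, hlint, ?_, ?_⟩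
  · rw [hIf, hkey, hIl, hIlneg]
    ring
  · rw [hIf, hkey]
    nlinarith [hgIpos]
end

section
/- The function ξ ↦ √(−log(1 − ξ²)) is integrable on (0,1); that is, ∫_0^1 √(−log(1 − ξ²)) dξ < ∞. Consequently, the cusped soliton u (satisfying u'(x)² = −log(1 − u(x)²) on ℝ \ {0}, with u strictly monotone on each half-line) has finite energy: ∫_ℝ u'(x)² dx = 2∫_0^1 √(−log(1 − ξ²)) dξ < ∞. -/
open MeasureTheory Filter Set

lemma log_one_sub_integrable :
    IntegrableOn (fun ξ : ℝ => -Real.log (1 - ξ)) (Ioo 0 1) := by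
  have key : IntegrableOn (fun ξ : ℝ => -Real.log (1 - ξ)) (Ioc (0:ℝ) 1) := by
    apply intervalIntegral.integrableOn_deriv_of_nonneg (g := fun ξ => (1 - ξ) * Real.log (1 - ξ) + ξ)
    · exact ((Real.continuous_mul_log.comp (continuous_const.sub continuous_id)).add
        continuous_id).continuousOn
    · intro x hx
      have h1 : (0:ℝ) < 1 - x := by linarith [hx.2]
      have hlog : HasDerivAt Real.log (1/(1-x)) (1-x) := by
        simpa using Real.hasDerivAt_log (ne_of_gt h1)
      have hin : HasDerivAt (fun ξ : ℝ => 1 - ξ) (-1) x := by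
        simpa using (hasDerivAt_id x).const_sub 1
      have hmul : HasDerivAt (fun t : ℝ => t * Real.log t)
          (Real.log (1-x) + 1) (1-x) := by
        have := (hasDerivAt_id (1-x)).mul (Real.hasDerivAt_log (ne_of_gt h1))
        refine this.congr_deriv ?_
        rw [id_eq, one_mul, mul_inv_cancel₀ h1.ne']
      have hcomp := hmul.comp x hin
      have := hcomp.add (hasDerivAt_id x)
      refine this.congr_deriv ?_
      ring
    · intro x hx
      have h1 : (0:ℝ) < 1 - x := by linarith [hx.2]
      have : Real.log (1 - x) ≤ 0 := Real.log_nonpos h1.le (by linarith [hx.1])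
      linarith
  exact key.mono_set Ioo_subset_Ioc_self

lemma sqrt_neg_log_integrable :
    IntegrableOn (fun ξ : ℝ => Real.sqrt (-Real.log (1 - ξ ^ 2))) (Ioo 0 1) := by
  have gm : Measurable (fun ξ : ℝ => Real.sqrt (-Real.log (1 - ξ ^ 2))) := by
    exact Real.continuous_sqrt.measurable.comp
      ((Real.measurable_log.comp (measurable_const.sub (measurable_id.pow_const 2))).neg)
  have hbound : IntegrableOn (fun ξ : ℝ => 1 + -Real.log (1 - ξ)) (Ioo 0 1) :=
    (integrableOn_const (by simp)).add log_one_sub_integrable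
  refine Integrable.mono' hbound gm.aestronglyMeasurable ?_
  rw [ae_restrict_iff' measurableSet_Ioo]
  refine ae_of_all _ (fun x hx => ?_)
  have hx0 : 0 < x := hx.1
  have hx1 : x < 1 := hx.2
  have h1 : (0:ℝ) < 1 - x ^ 2 := by nlinarith
  have h2 : (1:ℝ) - x ^ 2 ≤ 1 := by nlinarith
  set t : ℝ := -Real.log (1 - x ^ 2) with ht
  have htnn : 0 ≤ t := by
    have := Real.log_nonpos h1.le h2
    simp [ht]; linarith
  have hsqrt : Real.sqrt t ≤ 1 + t := by
    have h3 : t ≤ (1 + t) ^ 2 := by nlinarith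
    calc Real.sqrt t ≤ Real.sqrt ((1 + t) ^ 2) := Real.sqrt_le_sqrt h3
      _ = 1 + t := by rw [Real.sqrt_sq (by linarith)]
  have hsplit : t = -Real.log (1 - x) + -Real.log (1 + x) := by
    have : (1:ℝ) - x ^ 2 = (1 - x) * (1 + x) := by ring
    rw [ht, this, Real.log_mul (by linarith) (by linarith)]
    ring
  have hlog1 : 0 ≤ Real.log (1 + x) := Real.log_nonneg (by linarith)
  have : t ≤ -Real.log (1 - x) := by rw [hsplit]; linarith
  rw [Real.norm_eq_abs, abs_of_nonneg (Real.sqrt_nonneg _)]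
  calc Real.sqrt t ≤ 1 + t := hsqrt
    _ ≤ 1 + -Real.log (1 - x) := by linarith

/-- the function ξ ↦ √(−log(1 − ξ²)) is integrable on (0,1);
consequently the cusped soliton has finite energy:
∫_ℝ u'² dx = 2∫_0^1 √(−log(1 − ξ²)) dξ < ∞, i.e. u ∈ H¹(ℝ). -/
theorem cusped_soliton_finite_energy
    (u : ℝ → ℝ)
    (hcont : Continuous u)
    (heven : ∀ x : ℝ, u (-x) = u x)
    (h0 : u 0 = 1)
    (hrange : ∀ x : ℝ, x ≠ 0 → 0 < u x ∧ u x < 1)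
    (hdecay : Tendsto u (cocompact ℝ) (nhds 0))
    (hsmooth : ContDiffOn ℝ 2 u {(0 : ℝ)}ᶜ)
    (heq : ∀ x : ℝ, x ≠ 0 → (1 - u x ^ 2) * deriv (deriv u) x = u x)
    (hinv : ∀ x : ℝ, x ≠ 0 → (deriv u x) ^ 2 = -Real.log (1 - u x ^ 2))
    (hmono : StrictMonoOn u (Iic 0))
    (hanti : StrictAntiOn u (Ici 0)) :
    IntegrableOn (fun ξ : ℝ => Real.sqrt (-Real.log (1 - ξ ^ 2))) (Ioo 0 1) ∧
    Integrable (fun x : ℝ => (deriv u x) ^ 2) ∧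
    (∫ x : ℝ, (deriv u x) ^ 2) =
      2 * ∫ ξ in (0 : ℝ)..1, Real.sqrt (-Real.log (1 - ξ ^ 2)) := by
  set g : ℝ → ℝ := fun ξ => Real.sqrt (-Real.log (1 - ξ ^ 2)) with hg
  set F : ℝ → ℝ := fun x => (deriv u x) ^ 2 with hF
  -- differentiability off 0
  have hdiff : ∀ x : ℝ, x ≠ 0 → DifferentiableAt ℝ u x := by
    intro x hx
    exact (hsmooth.differentiableOn (by norm_num)).differentiableAt
      (isOpen_compl_singleton.mem_nhds (by simpa using hx))
  -- F is even
  have hFeven : ∀ x : ℝ, F (-x) = F x := by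
    intro x
    have h1 : deriv u x = -deriv u (-x) := by
      conv_lhs => rw [← funext heven]
      exact deriv_comp_neg u x
    simp only [hF]
    rw [h1]; ring
  -- derivative formula
  have hf' : ∀ x ∈ Ioi (0:ℝ), HasDerivWithinAt u (deriv u x) (Ioi 0) x :=
    fun x hx => ((hdiff x (ne_of_gt hx)).hasDerivAt).hasDerivWithinAt
  have hinj : InjOn u (Ioi 0) := (hanti.injOn).mono (Ioi_subset_Ici le_rfl)
  -- image of (0,∞) is (0,1)
  have himg : u '' Ioi 0 = Ioo 0 1 := by
    apply Subset.antisymm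
    · rintro y ⟨x, hx, rfl⟩
      exact hrange x (ne_of_gt hx)
    · intro y hy
      have hT : Tendsto u atTop (nhds 0) :=
        hdecay.mono_left (by rw [cocompact_eq_atBot_atTop]; exact le_sup_right)
      obtain ⟨X, hX1, hXy⟩ := ((eventually_ge_atTop (1:ℝ)).and
        (hT.eventually_lt_const hy.1)).exists
      have hX0 : (0:ℝ) ≤ X := by linarith
      have hy' : y ∈ Icc (u X) (u 0) := ⟨hXy.le, by rw [h0]; exact hy.2.le⟩
      obtain ⟨x, hx, hux⟩ := intermediate_value_Icc' hX0 hcont.continuousOn hy'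
      have hxne : x ≠ 0 := by
        rintro rfl
        rw [h0] at hux
        exact absurd hux.symm (ne_of_lt hy.2)
      exact ⟨x, lt_of_le_of_ne hx.1 (Ne.symm hxne), hux⟩
  -- integrand identity on (0,∞)
  have hkey : ∀ x ∈ Ioi (0:ℝ), |deriv u x| • g (u x) = F x := by
    intro x hx
    have hgu : g (u x) = |deriv u x| := by
      rw [hg]
      simp only
      rw [← hinv x (ne_of_gt hx), Real.sqrt_sq_eq_abs]
    show |deriv u x| • g (u x) = deriv u x ^ 2
    rw [hgu, smul_eq_mul, abs_mul_abs_self, ← sq]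
  -- part 1
  have part1 : IntegrableOn g (Ioo 0 1) := sqrt_neg_log_integrable
  -- integrability on (0,∞)
  have hIoi : IntegrableOn F (Ioi 0) := by
    have h := (integrableOn_image_iff_integrableOn_abs_deriv_smul
      measurableSet_Ioi hf' hinj g).mp (by rw [himg]; exact part1)
    exact (h.congr_fun hkey measurableSet_Ioi : _)
  -- integral identity on (0,∞)
  have hIeq : (∫ x in Ioi (0:ℝ), F x) = ∫ ξ in Ioo (0:ℝ) 1, g ξ := by
    rw [← himg, integral_image_eq_integral_abs_deriv_smul measurableSet_Ioi hf' hinj g]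
    exact setIntegral_congr_fun measurableSet_Ioi (fun x hx => (hkey x hx).symm)
  -- integrability on (-∞, 0]
  have hIic : IntegrableOn F (Iic 0) := by
    rw [← Measure.map_neg_eq_self (volume : Measure ℝ)]
    have m : MeasurableEmbedding fun x : ℝ => -x := (Homeomorph.neg ℝ).measurableEmbedding
    rw [m.integrableOn_map_iff]
    have : (F ∘ fun x : ℝ => -x) = F := funext fun x => hFeven x
    rw [this]
    simp only [neg_preimage, neg_Iic, neg_zero]
    exact Iff.mpr integrableOn_Ici_iff_integrableOn_Ioi hIoi
  -- full integrability
  have hint : Integrable F := by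
    have h := hIic.union hIoi
    rwa [Iic_union_Ioi, integrableOn_univ] at h
  refine ⟨part1, hint, ?_⟩
  -- the integral computation
  have hIic_eq : (∫ x in Iic (0:ℝ), F x) = ∫ x in Ioi (0:ℝ), F x := by
    have h := integral_comp_neg_Ioi (0:ℝ) F
    rw [neg_zero] at h
    rw [← h]
    exact setIntegral_congr_fun measurableSet_Ioi (fun x _ => (hFeven x))
  have htotal : (∫ x : ℝ, F x) = (∫ x in Iic (0:ℝ), F x) + ∫ x in Ioi (0:ℝ), F x :=
    (intervalIntegral.integral_Iic_add_Ioi hIic hIoi).symm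
  have hival : (∫ ξ in (0:ℝ)..1, g ξ) = ∫ ξ in Ioo (0:ℝ) 1, g ξ := by
    rw [intervalIntegral.integral_of_le zero_le_one, integral_Ioc_eq_integral_Ioo]
  rw [htotal, hIic_eq, hIeq, hival]
  ring
end
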